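/- arXiv:0901.4041 — 5 statements merged into one kernel-verified Lean document; each statement's English description precedes it below -/
import Mathlib

section
/- Let W : M^{3×3} → [0,+∞] satisfy: W is finite-valued and of class C¹ on M^{3×3}_+; W ≥ 0 everywhere and W(Id) = 0; W is finite-valued and of class C² on the open δ-neighbourhood {F : dist(F,SO(3)) < δ} of SO(3) for some δ > 0; and the growth condition |DW(F)Fᵀ| ≤ k(W(F)+1) for every F ∈ M^{3×3}_+, for some k > 0. Then there exists a constant C > 0 (depending only on W) such that for every t ∈ (0,1] and every G ∈ M^{3×3} with det(Id + tG) > 0, the matrix E := t⁻¹ DW(Id + tG)(Id + tG)ᵀ satisfies |E| ≤ C( t⁻¹ W(Id + tG) + |G| ). -/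
open Matrix MeasureTheory Filter Topology
open scoped ENNReal

noncomputable section

attribute [local instance] Matrix.normedAddCommGroup Matrix.normedSpace

/-- The Frobenius inner product `A : B = tr (Aᵀ B) = ∑ᵢⱼ Aᵢⱼ Bᵢⱼ`. -/
def frobInner {n : ℕ} (A B : Matrix (Fin n) (Fin n) ℝ) : ℝ := ∑ i, ∑ j, A i j * B i j

/-- The Frobenius norm `|A| = (A : A)^{1/2}`. -/
def frobNorm {n : ℕ} (A : Matrix (Fin n) (Fin n) ℝ) : ℝ := Real.sqrt (frobInner A A)

/-- The gradient of a function on 3×3 matrices with respect to the Frobenius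
inner product: `(DW F)ᵢⱼ = ∂W/∂Fᵢⱼ`. -/
def matGrad (w : Matrix (Fin 3) (Fin 3) ℝ → ℝ) (F : Matrix (Fin 3) (Fin 3) ℝ) :
    Matrix (Fin 3) (Fin 3) ℝ :=
  fun i j => fderiv ℝ w F (Matrix.single i j 1)

/-- The set of proper rotations SO(3). -/
def SO3 : Set (Matrix (Fin 3) (Fin 3) ℝ) := {R | Rᵀ * R = 1 ∧ R.det = 1}

/-- The real-valued function associated to an extended-real-valued energy density. -/
def wr (W : Matrix (Fin 3) (Fin 3) ℝ → ℝ≥0∞) : Matrix (Fin 3) (Fin 3) ℝ → ℝ :=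
  fun F => (W F).toReal

/-- The Frobenius distance from a matrix to SO(3). -/
def distSO3 (F : Matrix (Fin 3) (Fin 3) ℝ) : ℝ :=
  sInf ((fun R => frobNorm (F - R)) '' SO3)

instance instNACGdual : NormedAddCommGroup (Matrix (Fin 3) (Fin 3) ℝ →L[ℝ] ℝ) :=
  ContinuousLinearMap.toNormedAddCommGroup

instance instNSdual : NormedSpace ℝ (Matrix (Fin 3) (Fin 3) ℝ →L[ℝ] ℝ) :=
  ContinuousLinearMap.toNormedSpace

instance instNACGdual2 :
    NormedAddCommGroup (Matrix (Fin 3) (Fin 3) ℝ →L[ℝ] (Matrix (Fin 3) (Fin 3) ℝ →L[ℝ] ℝ)) :=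
  ContinuousLinearMap.toNormedAddCommGroup

instance instSCCdual : @SMulCommClass ℝ ℝ (Matrix (Fin 3) (Fin 3) ℝ →L[ℝ] ℝ)
    (@SMulZeroClass.toSMul _ _ _ (@SMulWithZero.toSMulZeroClass _ _ _ _
      (@MulActionWithZero.toSMulWithZero _ _ _ _ (@Module.toMulActionWithZero _ _ _ _
        instNSdual.toModule))))
    (@SMulZeroClass.toSMul _ _ _ (@SMulWithZero.toSMulZeroClass _ _ _ _
      (@MulActionWithZero.toSMulWithZero _ _ _ _ (@Module.toMulActionWithZero _ _ _ _
        instNSdual.toModule)))) := by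
  constructor
  intro a b f
  exact smul_comm a b f

instance instNSdual2 :
    NormedSpace ℝ (Matrix (Fin 3) (Fin 3) ℝ →L[ℝ] (Matrix (Fin 3) (Fin 3) ℝ →L[ℝ] ℝ)) :=
  ContinuousLinearMap.toNormedSpace

namespace aux

lemma frobInner_self_eq {n : ℕ} (A : Matrix (Fin n) (Fin n) ℝ) :
    frobInner A A = ∑ i, ∑ j, (A i j) ^ 2 := by
  simp [frobInner, sq]

lemma frobInner_self_nonneg {n : ℕ} (A : Matrix (Fin n) (Fin n) ℝ) : 0 ≤ frobInner A A := by
  rw [frobInner_self_eq]; positivity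

lemma frobNorm_nonneg {n : ℕ} (A : Matrix (Fin n) (Fin n) ℝ) : 0 ≤ frobNorm A :=
  Real.sqrt_nonneg _

lemma frobNorm_smul {n : ℕ} (c : ℝ) (A : Matrix (Fin n) (Fin n) ℝ) :
    frobNorm (c • A) = |c| * frobNorm A := by
  have h : frobInner (c • A) (c • A) = c ^ 2 * frobInner A A := by
    unfold frobInner
    rw [Finset.mul_sum]
    refine Finset.sum_congr rfl fun i _ => ?_
    rw [Finset.mul_sum]
    refine Finset.sum_congr rfl fun j _ => ?_
    simp [Matrix.smul_apply]; ring
  unfold frobNorm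
  rw [h, Real.sqrt_mul (sq_nonneg c), Real.sqrt_sq_eq_abs]

lemma frobNorm_transpose {n : ℕ} (A : Matrix (Fin n) (Fin n) ℝ) :
    frobNorm Aᵀ = frobNorm A := by
  unfold frobNorm frobInner
  rw [Finset.sum_comm]
  simp [Matrix.transpose_apply]

lemma frobNorm_mul_le {n : ℕ} (A B : Matrix (Fin n) (Fin n) ℝ) :
    frobNorm (A * B) ≤ frobNorm A * frobNorm B := by
  have h : frobInner (A * B) (A * B) ≤ frobInner A A * frobInner B B := by
    rw [frobInner_self_eq, frobInner_self_eq, frobInner_self_eq]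
    calc ∑ i, ∑ j, ((A * B) i j) ^ 2
        ≤ ∑ i, ∑ j, (∑ l, (A i l) ^ 2) * (∑ l, (B l j) ^ 2) := by
          refine Finset.sum_le_sum fun i _ => Finset.sum_le_sum fun j _ => ?_
          have := Finset.sum_mul_sq_le_sq_mul_sq Finset.univ (fun l => A i l) (fun l => B l j)
          simpa [Matrix.mul_apply] using this
      _ = (∑ i, ∑ l, (A i l) ^ 2) * (∑ j, ∑ l, (B l j) ^ 2) := by
          rw [Finset.sum_mul_sum]
      _ = (∑ i, ∑ l, (A i l) ^ 2) * (∑ l, ∑ j, (B l j) ^ 2) := by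
          congr 1
          exact Finset.sum_comm
  calc frobNorm (A * B) = Real.sqrt (frobInner (A * B) (A * B)) := rfl
    _ ≤ Real.sqrt (frobInner A A * frobInner B B) := Real.sqrt_le_sqrt h
    _ = frobNorm A * frobNorm B := by
        rw [Real.sqrt_mul (frobInner_self_nonneg A)]; rfl

lemma abs_entry_le_frobNorm {n : ℕ} (A : Matrix (Fin n) (Fin n) ℝ) (i j : Fin n) :
    |A i j| ≤ frobNorm A := by
  have h : (A i j) ^ 2 ≤ frobInner A A := by
    rw [frobInner_self_eq]
    calc (A i j) ^ 2 ≤ ∑ l, (A i l) ^ 2 :=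
          Finset.single_le_sum (f := fun l => (A i l) ^ 2) (fun l _ => sq_nonneg _)
            (Finset.mem_univ j)
      _ ≤ ∑ i', ∑ l, (A i' l) ^ 2 :=
          Finset.single_le_sum (f := fun i' => ∑ l, (A i' l) ^ 2)
            (fun i' _ => Finset.sum_nonneg fun l _ => sq_nonneg _) (Finset.mem_univ i)
  calc |A i j| = Real.sqrt ((A i j) ^ 2) := (Real.sqrt_sq_eq_abs _).symm
    _ ≤ Real.sqrt (frobInner A A) := Real.sqrt_le_sqrt h

lemma norm_le_frobNorm (A : Matrix (Fin 3) (Fin 3) ℝ) : ‖A‖ ≤ frobNorm A := by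
  rw [Matrix.norm_le_iff (frobNorm_nonneg A)]
  intro i j
  simpa [Real.norm_eq_abs] using abs_entry_le_frobNorm A i j

lemma frobNorm_le_of_entries (A : Matrix (Fin 3) (Fin 3) ℝ) {c : ℝ} (hc : 0 ≤ c)
    (h : ∀ i j, |A i j| ≤ c) : frobNorm A ≤ 3 * c := by
  have h1 : frobInner A A ≤ 9 * c ^ 2 := by
    rw [frobInner_self_eq]
    calc ∑ i, ∑ j, (A i j) ^ 2 ≤ ∑ _i : Fin 3, ∑ _j : Fin 3, c ^ 2 := by
          refine Finset.sum_le_sum fun i _ => Finset.sum_le_sum fun j _ => ?_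
          have := h i j
          nlinarith [abs_nonneg (A i j), sq_abs (A i j)]
      _ = 9 * c ^ 2 := by simp; ring
  calc frobNorm A = Real.sqrt (frobInner A A) := rfl
    _ ≤ Real.sqrt (9 * c ^ 2) := Real.sqrt_le_sqrt h1
    _ = 3 * c := by
        rw [show (9 : ℝ) * c ^ 2 = (3 * c) ^ 2 by ring, Real.sqrt_sq (by linarith)]

lemma frobNorm_le_three_norm (A : Matrix (Fin 3) (Fin 3) ℝ) : frobNorm A ≤ 3 * ‖A‖ :=
  frobNorm_le_of_entries A (norm_nonneg A)
    (fun i j => by simpa [Real.norm_eq_abs] using Matrix.norm_entry_le_entrywise_sup_norm A (i := i) (j := j))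

lemma one_mem_SO3 : (1 : Matrix (Fin 3) (Fin 3) ℝ) ∈ SO3 := by
  constructor
  · simp
  · simp

lemma distSO3_le_sub_one (F : Matrix (Fin 3) (Fin 3) ℝ) : distSO3 F ≤ frobNorm (F - 1) := by
  refine csInf_le ⟨0, ?_⟩ ⟨1, one_mem_SO3, rfl⟩
  rintro x ⟨R, _, rfl⟩
  exact frobNorm_nonneg _

lemma norm_one_le : ‖(1 : Matrix (Fin 3) (Fin 3) ℝ)‖ ≤ 1 := by
  rw [Matrix.norm_le_iff (by norm_num)]
  intro i j
  rw [Matrix.one_apply]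
  split <;> simp

end aux

namespace aux

lemma frobNorm_matGrad_le (w : Matrix (Fin 3) (Fin 3) ℝ → ℝ) (F : Matrix (Fin 3) (Fin 3) ℝ) :
    frobNorm (matGrad w F) ≤ 3 * ‖fderiv ℝ w F‖ := by
  refine frobNorm_le_of_entries _ (norm_nonneg _) fun i j => ?_
  have h1 : ‖(Matrix.single i j (1:ℝ))‖ ≤ 1 := by
    rw [Matrix.norm_le_iff (by norm_num)]
    intro i' j'
    rw [Matrix.single]
    dsimp only [Matrix.of_apply]
    split <;> simp
  calc |matGrad w F i j| = ‖fderiv ℝ w F (Matrix.single i j 1)‖ := rfl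
    _ ≤ ‖fderiv ℝ w F‖ * ‖(Matrix.single i j (1:ℝ))‖ := (fderiv ℝ w F).le_opNorm _
    _ ≤ ‖fderiv ℝ w F‖ * 1 := by
        exact mul_le_mul_of_nonneg_left h1 (norm_nonneg _)
    _ = ‖fderiv ℝ w F‖ := mul_one _

end aux


/-- under the single-well and growth assumptions on `W`, the scaled stress
`E = t⁻¹ DW(Id + tG)(Id + tG)ᵀ` satisfies `|E| ≤ C (t⁻¹ W(Id + tG) + |G|)`. -/
theorem statement2 (W : Matrix (Fin 3) (Fin 3) ℝ → ℝ≥0∞) (δ k : ℝ) (hδ : 0 < δ) (hk : 0 < k)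
    (hfin : ∀ F : Matrix (Fin 3) (Fin 3) ℝ, 0 < F.det → W F ≠ ⊤)
    (hC1 : ContDiffOn ℝ 1 (wr W) {F : Matrix (Fin 3) (Fin 3) ℝ | 0 < F.det})
    (hWId : W 1 = 0)
    (hfinδ : ∀ F : Matrix (Fin 3) (Fin 3) ℝ, distSO3 F < δ → W F ≠ ⊤)
    (hC2 : ContDiffOn ℝ 2 (wr W) {F : Matrix (Fin 3) (Fin 3) ℝ | distSO3 F < δ})
    (hgrowth : ∀ F : Matrix (Fin 3) (Fin 3) ℝ, 0 < F.det →
      frobNorm (matGrad (wr W) F * Fᵀ) ≤ k * (wr W F + 1)) :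
    ∃ C > (0:ℝ), ∀ t ∈ Set.Ioc (0:ℝ) 1, ∀ G : Matrix (Fin 3) (Fin 3) ℝ,
      0 < (1 + t • G).det →
      frobNorm (t⁻¹ • (matGrad (wr W) (1 + t • G) * (1 + t • G)ᵀ)) ≤
        C * (t⁻¹ * wr W (1 + t • G) + frobNorm G) := by
  classical
  set w := wr W with hw
  have hw0 : ∀ F, 0 ≤ w F := fun F => ENNReal.toReal_nonneg
  have hw1 : w 1 = 0 := by simp [hw, wr, hWId]
  set S : Set (Matrix (Fin 3) (Fin 3) ℝ) := Metric.ball (1 : Matrix (Fin 3) (Fin 3) ℝ) (δ/3)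
    with hS
  have hSsub : S ⊆ {F | distSO3 F < δ} := by
    intro F hF
    have h1 : distSO3 F ≤ frobNorm (F - 1) := aux.distSO3_le_sub_one F
    have h2 : frobNorm (F - 1) ≤ 3 * ‖F - 1‖ := aux.frobNorm_le_three_norm _
    have h3 : ‖F - 1‖ < δ/3 := by rwa [hS, Metric.mem_ball, dist_eq_norm] at hF
    simp only [Set.mem_setOf_eq]
    linarith
  have hSopen : IsOpen S := Metric.isOpen_ball
  have hC2' : ContDiffOn ℝ 2 w S := hC2.mono hSsub
  have hf1 : ContDiffOn ℝ 1 (fderiv ℝ w) S :=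
    hC2'.fderiv_of_isOpen (m := 1) hSopen (by norm_num)
  have hfd : ∀ F ∈ S, DifferentiableAt ℝ (fderiv ℝ w) F := fun F hF =>
    ((hf1.differentiableOn (by norm_num)).differentiableAt (hSopen.mem_nhds hF))
  have hf0 : ContinuousOn (fderiv ℝ (fderiv ℝ w)) S :=
    (hf1.fderiv_of_isOpen (m := 0) hSopen (by norm_num)).continuousOn
  set r : ℝ := δ/6 with hrdef
  have hr : 0 < r := by positivity
  have hball : Metric.closedBall (1 : Matrix (Fin 3) (Fin 3) ℝ) r ⊆ S := by
    rw [hS]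
    exact Metric.closedBall_subset_ball (by rw [hrdef]; linarith)
  obtain ⟨M, hM⟩ := (isCompact_closedBall (1 : Matrix (Fin 3) (Fin 3) ℝ) r).exists_bound_of_continuousOn (hf0.mono hball)
  set M' : ℝ := |M| with hM'def
  have hM'0 : 0 ≤ M' := abs_nonneg M
  have hM' : ∀ x ∈ Metric.closedBall (1 : Matrix (Fin 3) (Fin 3) ℝ) r,
      ‖fderiv ℝ (fderiv ℝ w) x‖ ≤ M' := fun x hx => (hM x hx).trans (le_abs_self M)
  -- derivative of w vanishes at the identity
  have hmin : IsLocalMin w 1 :=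
    Filter.Eventually.of_forall (fun x => by rw [hw1]; exact hw0 x)
  have hDW1 : fderiv ℝ w 1 = 0 := hmin.fderiv_eq_zero
  -- gradient bound on the closed ball
  have hgrad : ∀ F ∈ Metric.closedBall (1 : Matrix (Fin 3) (Fin 3) ℝ) r,
      ‖fderiv ℝ w F‖ ≤ M' * ‖F - 1‖ := by
    intro F hF
    have h := Convex.norm_image_sub_le_of_norm_fderiv_le (𝕜 := ℝ) (f := fderiv ℝ w)
      (fun x hx => hfd x (hball hx)) hM' (convex_closedBall _ _)
      (Metric.mem_closedBall_self hr.le) hF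
    rw [hDW1] at h
    convert h using 2
    exact (sub_zero _).symm
  -- the constant
  refine ⟨9 * M' * (1 + r) + k + k / r + 1, by positivity, ?_⟩
  intro t ht G hdet
  obtain ⟨ht0, ht1⟩ := ht
  set C : ℝ := 9 * M' * (1 + r) + k + k / r + 1 with hCdef
  set F : Matrix (Fin 3) (Fin 3) ℝ := 1 + t • G with hF
  have hFsub : F - 1 = t • G := by rw [hF]; abel
  have hFnorm : ‖F - 1‖ = t * ‖G‖ := by
    rw [hFsub, norm_smul, Real.norm_eq_abs, abs_of_pos ht0]
  have hGfrob : ‖G‖ ≤ frobNorm G := aux.norm_le_frobNorm G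
  have hGnn : 0 ≤ frobNorm G := aux.frobNorm_nonneg G
  have hwFnn : 0 ≤ t⁻¹ * w F := mul_nonneg (by positivity) (hw0 F)
  have hLHS : frobNorm (t⁻¹ • (matGrad w F * Fᵀ)) = t⁻¹ * frobNorm (matGrad w F * Fᵀ) := by
    rw [aux.frobNorm_smul, abs_of_pos (by positivity)]
  by_cases hcase : t * ‖G‖ ≤ r
  · -- near the identity
    have hFball : F ∈ Metric.closedBall (1 : Matrix (Fin 3) (Fin 3) ℝ) r := by
      rw [Metric.mem_closedBall, dist_eq_norm, hFnorm]
      exact hcase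
    have h1 : frobNorm (matGrad w F) ≤ 3 * (M' * (t * ‖G‖)) := by
      calc frobNorm (matGrad w F) ≤ 3 * ‖fderiv ℝ w F‖ := aux.frobNorm_matGrad_le w F
        _ ≤ 3 * (M' * (t * ‖G‖)) := by
            have := hgrad F hFball
            rw [hFnorm] at this
            linarith
    have h2 : frobNorm Fᵀ ≤ 3 * (1 + r) := by
      rw [aux.frobNorm_transpose]
      calc frobNorm F ≤ 3 * ‖F‖ := aux.frobNorm_le_three_norm F
        _ ≤ 3 * (1 + r) := by
            have hF1 : ‖F‖ ≤ ‖(1 : Matrix (Fin 3) (Fin 3) ℝ)‖ + ‖t • G‖ := by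
              rw [hF]; exact norm_add_le _ _
            have h1' : ‖(1 : Matrix (Fin 3) (Fin 3) ℝ)‖ ≤ 1 := aux.norm_one_le
            have h2' : ‖t • G‖ ≤ r := by
              rw [norm_smul, Real.norm_eq_abs, abs_of_pos ht0]; exact hcase
            linarith
    have h3 : frobNorm (matGrad w F * Fᵀ) ≤ (3 * (M' * (t * ‖G‖))) * (3 * (1 + r)) := by
      calc frobNorm (matGrad w F * Fᵀ) ≤ frobNorm (matGrad w F) * frobNorm Fᵀ :=
            aux.frobNorm_mul_le _ _
        _ ≤ (3 * (M' * (t * ‖G‖))) * (3 * (1 + r)) := by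
            apply mul_le_mul h1 h2 (aux.frobNorm_nonneg _)
            positivity
    rw [hLHS]
    have ht' : t⁻¹ * t = 1 := inv_mul_cancel₀ (ne_of_gt ht0)
    have h4 : t⁻¹ * frobNorm (matGrad w F * Fᵀ) ≤ 9 * M' * (1 + r) * ‖G‖ := by
      have := mul_le_mul_of_nonneg_left h3 (le_of_lt (inv_pos.mpr ht0))
      calc t⁻¹ * frobNorm (matGrad w F * Fᵀ)
          ≤ t⁻¹ * ((3 * (M' * (t * ‖G‖))) * (3 * (1 + r))) := this
        _ = (t⁻¹ * t) * (9 * M' * (1 + r) * ‖G‖) := by ring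
        _ = 9 * M' * (1 + r) * ‖G‖ := by rw [ht']; ring
    have h5 : 9 * M' * (1 + r) * ‖G‖ ≤ 9 * M' * (1 + r) * frobNorm G :=
      mul_le_mul_of_nonneg_left hGfrob (by positivity)
    have hC1' : 9 * M' * (1 + r) ≤ C := by
      rw [hCdef]
      have : 0 < k / r := by positivity
      linarith
    have hCpos : 0 < C := by rw [hCdef]; positivity
    calc t⁻¹ * frobNorm (matGrad w F * Fᵀ) ≤ 9 * M' * (1 + r) * frobNorm G :=
          le_trans h4 h5
      _ ≤ C * frobNorm G := mul_le_mul_of_nonneg_right hC1' hGnn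
      _ ≤ C * (t⁻¹ * w F + frobNorm G) :=
          mul_le_mul_of_nonneg_left (le_add_of_nonneg_left hwFnn) hCpos.le
  · -- far from the identity
    push_neg at hcase
    have hdet' : 0 < F.det := hdet
    have hg := hgrowth F hdet'
    rw [hLHS]
    have hti : (0:ℝ) < t⁻¹ := inv_pos.mpr ht0
    have htinv : t⁻¹ ≤ frobNorm G / r := by
      rw [le_div_iff₀ hr]
      have h2 := mul_lt_mul_of_pos_left hcase hti
      rw [← mul_assoc, inv_mul_cancel₀ (ne_of_gt ht0), one_mul] at h2
      have h3 : ‖G‖ ≤ frobNorm G := hGfrob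
      linarith
    have h6 : t⁻¹ * frobNorm (matGrad w F * Fᵀ) ≤ k * (t⁻¹ * w F) + k * t⁻¹ := by
      calc t⁻¹ * frobNorm (matGrad w F * Fᵀ) ≤ t⁻¹ * (k * (w F + 1)) :=
            mul_le_mul_of_nonneg_left hg hti.le
        _ = k * (t⁻¹ * w F) + k * t⁻¹ := by ring
    have h7 : k * t⁻¹ ≤ (k / r) * frobNorm G := by
      calc k * t⁻¹ ≤ k * (frobNorm G / r) := mul_le_mul_of_nonneg_left htinv hk.le
        _ = (k / r) * frobNorm G := by ring
    have h9M : 0 ≤ 9 * M' * (1 + r) := by positivity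
    have hkr : 0 < k / r := by positivity
    have hkC : k ≤ C := by rw [hCdef]; linarith
    have hkrC : k / r ≤ C := by rw [hCdef]; linarith
    calc t⁻¹ * frobNorm (matGrad w F * Fᵀ)
        ≤ k * (t⁻¹ * w F) + (k / r) * frobNorm G := by linarith
      _ ≤ C * (t⁻¹ * w F) + C * frobNorm G := by
          have ha := mul_le_mul_of_nonneg_right hkC hwFnn
          have hb := mul_le_mul_of_nonneg_right hkrC hGnn
          linarith
      _ = C * (t⁻¹ * w F + frobNorm G) := by ring
end
end

section
/- Let Ω ⊂ ℝ³ be measurable with finite Lebesgue measure and let M > 0. Let W : M^{3×3} → [0,+∞] satisfy: W is finite-valued and of class C¹ on M^{3×3}_+; W ≥ 0 everywhere and W(Id) = 0; W is finite-valued and of class C² on the open δ-neighbourhood of SO(3) for some δ > 0; and |DW(F)Fᵀ| ≤ k(W(F)+1) for every F ∈ M^{3×3}_+, for some k > 0. Then there exists a constant C > 0 (depending only on W and M) with the following property: for every t ∈ (0,1] and every measurable G : Ω → M^{3×3} with det(Id + tG(x)) > 0 for a.e. x, ‖G‖_{L²(Ω)} ≤ M and ∫_Ω W(Id + tG) dx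 ≤ M t², the function E(x) := t⁻¹ DW(Id + tG(x))(Id + tG(x))ᵀ satisfies ∫_Λ |E| dx ≤ C( t + |Λ|^{1/2} ) for every measurable set Λ ⊆ Ω. -/
open Matrix MeasureTheory Filter Topology
open scoped ENNReal

noncomputable section

attribute [local instance] Matrix.normedAddCommGroup Matrix.normedSpace

lemma frobNorm_nonneg {n : ℕ} (A : Matrix (Fin n) (Fin n) ℝ) : 0 ≤ frobNorm A :=
  Real.sqrt_nonneg _

lemma frobNorm_smul {n : ℕ} (c : ℝ) (A : Matrix (Fin n) (Fin n) ℝ) :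
    frobNorm (c • A) = |c| * frobNorm A := by
  have h : frobInner (c • A) (c • A) = c ^ 2 * frobInner A A := by
    unfold frobInner
    rw [Finset.mul_sum]
    refine Finset.sum_congr rfl fun i _ => ?_
    rw [Finset.mul_sum]
    refine Finset.sum_congr rfl fun j _ => ?_
    simp [Matrix.smul_apply]
    ring
  rw [frobNorm, h, Real.sqrt_mul (sq_nonneg c), Real.sqrt_sq_eq_abs, frobNorm]

lemma norm_le_frobNorm {n : ℕ} (A : Matrix (Fin n) (Fin n) ℝ) : ‖A‖ ≤ frobNorm A := by
  rw [Matrix.norm_le_iff (frobNorm_nonneg A)]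
  intro i j
  rw [frobNorm, Real.norm_eq_abs, ← Real.sqrt_sq_eq_abs]
  apply Real.sqrt_le_sqrt
  have h1 : A i j ^ 2 = A i j * A i j := sq (A i j) ▸ by ring
  rw [h1]
  unfold frobInner
  calc A i j * A i j ≤ ∑ j', A i j' * A i j' :=
        Finset.single_le_sum (f := fun j' => A i j' * A i j')
          (fun j' _ => mul_self_nonneg _) (Finset.mem_univ j)
    _ ≤ ∑ i', ∑ j', A i' j' * A i' j' :=
        Finset.single_le_sum (f := fun i' => ∑ j', A i' j' * A i' j')
          (fun i' _ => Finset.sum_nonneg fun j' _ => mul_self_nonneg _) (Finset.mem_univ i)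

lemma frobNorm_le_three (A : Matrix (Fin 3) (Fin 3) ℝ) : frobNorm A ≤ 3 * ‖A‖ := by
  have h : frobInner A A ≤ (3 * ‖A‖) ^ 2 := by
    unfold frobInner
    have : ∀ i j : Fin 3, A i j * A i j ≤ ‖A‖ ^ 2 := by
      intro i j
      have := Matrix.norm_entry_le_entrywise_sup_norm A (i := i) (j := j)
      rw [Real.norm_eq_abs] at this
      nlinarith [abs_nonneg (A i j), abs_mul_abs_self (A i j)]
    calc ∑ i, ∑ j, A i j * A i j ≤ ∑ i : Fin 3, ∑ j : Fin 3, ‖A‖ ^ 2 :=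
          Finset.sum_le_sum fun i _ => Finset.sum_le_sum fun j _ => this i j
      _ = 9 * ‖A‖ ^ 2 := by simp; ring
      _ = (3 * ‖A‖) ^ 2 := by ring
  rw [frobNorm]
  calc Real.sqrt (frobInner A A) ≤ Real.sqrt ((3 * ‖A‖) ^ 2) := Real.sqrt_le_sqrt h
    _ = |3 * ‖A‖| := Real.sqrt_sq_eq_abs _
    _ = 3 * ‖A‖ := abs_of_nonneg (by positivity)

lemma norm_mul_transpose_le (A B : Matrix (Fin 3) (Fin 3) ℝ) :
    ‖A * Bᵀ‖ ≤ 3 * (‖A‖ * ‖B‖) := by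
  rw [Matrix.norm_le_iff (by positivity)]
  intro i j
  rw [Matrix.mul_apply, Real.norm_eq_abs]
  calc |∑ l, A i l * Bᵀ l j| ≤ ∑ l, |A i l * Bᵀ l j| := Finset.abs_sum_le_sum_abs _ _
    _ ≤ ∑ l : Fin 3, ‖A‖ * ‖B‖ := by
        refine Finset.sum_le_sum fun l _ => ?_
        rw [abs_mul, Matrix.transpose_apply]
        have h1 : |A i l| ≤ ‖A‖ := Matrix.norm_entry_le_entrywise_sup_norm A
        have h2 : |B j l| ≤ ‖B‖ := Matrix.norm_entry_le_entrywise_sup_norm B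
        exact mul_le_mul h1 h2 (abs_nonneg _) (le_trans (abs_nonneg _) h1)
    _ = 3 * (‖A‖ * ‖B‖) := by rw [Finset.sum_const, Finset.card_univ]; norm_num [mul_comm]

lemma frobNorm_mul_transpose_le (A B : Matrix (Fin 3) (Fin 3) ℝ) :
    frobNorm (A * Bᵀ) ≤ 9 * (‖A‖ * ‖B‖) := by
  calc frobNorm (A * Bᵀ) ≤ 3 * ‖A * Bᵀ‖ := frobNorm_le_three _
    _ ≤ 3 * (3 * (‖A‖ * ‖B‖)) := by linarith [norm_mul_transpose_le A B]
    _ = 9 * (‖A‖ * ‖B‖) := by ring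

lemma one_mem_SO3 : (1 : Matrix (Fin 3) (Fin 3) ℝ) ∈ SO3 :=
  ⟨by simp, Matrix.det_one⟩

lemma distSO3_le_frobNorm_sub_one (F : Matrix (Fin 3) (Fin 3) ℝ) :
    distSO3 F ≤ frobNorm (F - 1) := by
  apply csInf_le
  · exact ⟨0, fun y hy => by
      obtain ⟨R, hR, rfl⟩ := hy; exact frobNorm_nonneg _⟩
  · exact ⟨1, one_mem_SO3, rfl⟩

lemma norm_one_le : ‖(1 : Matrix (Fin 3) (Fin 3) ℝ)‖ ≤ 1 := by
  rw [Matrix.norm_le_iff (by norm_num)]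
  intro i j
  rw [Matrix.one_apply, Real.norm_eq_abs]
  split <;> simp

lemma norm_stdBasis_le (i j : Fin 3) : ‖Matrix.single i j (1:ℝ)‖ ≤ 1 := by
  rw [Matrix.norm_le_iff (by norm_num)]
  intro a b
  rw [Matrix.single, Real.norm_eq_abs]
  simp only [Matrix.of_apply]
  split <;> simp

instance instNACGCLM : NormedAddCommGroup (Matrix (Fin 3) (Fin 3) ℝ →L[ℝ] ℝ) :=
  ContinuousLinearMap.toNormedAddCommGroup

instance instNSCLM : NormedSpace ℝ (Matrix (Fin 3) (Fin 3) ℝ →L[ℝ] ℝ) :=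
  ContinuousLinearMap.toNormedSpace

lemma key (W : Matrix (Fin 3) (Fin 3) ℝ → ℝ≥0∞) (δ : ℝ) (hδ : 0 < δ) (hWId : W 1 = 0)
    (hC2 : ContDiffOn ℝ 2 (wr W) {F : Matrix (Fin 3) (Fin 3) ℝ | distSO3 F < δ}) :
    ∃ L > (0:ℝ), ∃ r > (0:ℝ), ∀ F : Matrix (Fin 3) (Fin 3) ℝ, ‖F - 1‖ < r →
      frobNorm (matGrad (wr W) F * Fᵀ) ≤ L * ‖F - 1‖ := by
  have hball : Metric.ball (1 : Matrix (Fin 3) (Fin 3) ℝ) (δ/3) ⊆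
      {F : Matrix (Fin 3) (Fin 3) ℝ | distSO3 F < δ} := by
    intro F hF
    rw [Metric.mem_ball, dist_eq_norm] at hF
    have h1 := distSO3_le_frobNorm_sub_one F
    have h2 := frobNorm_le_three (F - 1)
    simp only [Set.mem_setOf_eq]
    linarith
  have hnhds : {F : Matrix (Fin 3) (Fin 3) ℝ | distSO3 F < δ} ∈
      𝓝 (1 : Matrix (Fin 3) (Fin 3) ℝ) :=
    Filter.mem_of_superset (Metric.ball_mem_nhds _ (by linarith)) hball
  have hC2at : ContDiffAt ℝ 2 (wr W) 1 := hC2.contDiffAt hnhds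
  have hg : ContDiffAt ℝ 1 (fderiv ℝ (wr W)) 1 := hC2at.fderiv_right (by norm_num)
  obtain ⟨K, s, hs, hK⟩ := hg.exists_lipschitzOnWith
  obtain ⟨ε, hε, hball2⟩ := Metric.mem_nhds_iff.mp hs
  have hmin : IsLocalMin (wr W) 1 := Filter.Eventually.of_forall fun F => by
    simp only [wr, hWId, ENNReal.toReal_zero]
    exact ENNReal.toReal_nonneg
  have hgrad0 : fderiv ℝ (wr W) 1 = 0 := hmin.fderiv_eq_zero
  refine ⟨18 * K + 1, by positivity, min ε 1, by positivity, fun F hF => ?_⟩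
  have hF1 : ‖F - 1‖ < ε := lt_of_lt_of_le hF (min_le_left _ _)
  have hF2 : ‖F - 1‖ ≤ 1 := le_of_lt (lt_of_lt_of_le hF (min_le_right _ _))
  have hFs : F ∈ s := hball2 (by rw [Metric.mem_ball, dist_eq_norm]; exact hF1)
  have h1s : (1 : Matrix (Fin 3) (Fin 3) ℝ) ∈ s := mem_of_mem_nhds hs
  have hlip : ‖fderiv ℝ (wr W) F‖ ≤ K * ‖F - 1‖ := by
    have h := hK.dist_le_mul F hFs 1 h1s
    rw [dist_eq_norm, dist_eq_norm, hgrad0] at h; exact le_of_eq_of_le (congrArg norm (sub_zero _).symm) h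
  have hmg : ‖matGrad (wr W) F‖ ≤ K * ‖F - 1‖ := by
    rw [Matrix.norm_le_iff (by positivity)]
    intro i j
    calc ‖matGrad (wr W) F i j‖
        = ‖fderiv ℝ (wr W) F (Matrix.single i j 1)‖ := rfl
      _ ≤ ‖fderiv ℝ (wr W) F‖ * ‖Matrix.single i j (1:ℝ)‖ :=
          (fderiv ℝ (wr W) F).le_opNorm _
      _ ≤ (K * ‖F - 1‖) * 1 :=
          mul_le_mul hlip (norm_stdBasis_le i j) (norm_nonneg _) (by positivity)
      _ = K * ‖F - 1‖ := mul_one _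
  have hFn : ‖F‖ ≤ 2 := by
    calc ‖F‖ = ‖(F - 1) + 1‖ := by rw [sub_add_cancel]
      _ ≤ ‖F - 1‖ + ‖(1 : Matrix (Fin 3) (Fin 3) ℝ)‖ := norm_add_le _ _
      _ ≤ 1 + 1 := add_le_add hF2 norm_one_le
      _ = 2 := by norm_num
  calc frobNorm (matGrad (wr W) F * Fᵀ)
      ≤ 9 * (‖matGrad (wr W) F‖ * ‖F‖) := frobNorm_mul_transpose_le _ _
    _ ≤ 9 * ((K * ‖F - 1‖) * 2) := by
        refine mul_le_mul_of_nonneg_left ?_ (by norm_num)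
        exact mul_le_mul hmg hFn (norm_nonneg _) (by positivity)
    _ = 18 * K * ‖F - 1‖ := by ring
    _ ≤ (18 * K + 1) * ‖F - 1‖ := by nlinarith [norm_nonneg (F - 1)]

/-- an `L¹` bound `∫_Λ |E| ≤ C (t + |Λ|^{1/2})` for the scaled stress. -/
theorem statement3 (Ω : Set (Fin 3 → ℝ)) (hΩm : MeasurableSet Ω) (hΩfin : volume Ω < ⊤)
    (M : ℝ) (hM : 0 < M)
    (W : Matrix (Fin 3) (Fin 3) ℝ → ℝ≥0∞) (δ k : ℝ) (hδ : 0 < δ) (hk : 0 < k)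
    (hfin : ∀ F : Matrix (Fin 3) (Fin 3) ℝ, 0 < F.det → W F ≠ ⊤)
    (hC1 : ContDiffOn ℝ 1 (wr W) {F : Matrix (Fin 3) (Fin 3) ℝ | 0 < F.det})
    (hWId : W 1 = 0)
    (hfinδ : ∀ F : Matrix (Fin 3) (Fin 3) ℝ, distSO3 F < δ → W F ≠ ⊤)
    (hC2 : ContDiffOn ℝ 2 (wr W) {F : Matrix (Fin 3) (Fin 3) ℝ | distSO3 F < δ})
    (hgrowth : ∀ F : Matrix (Fin 3) (Fin 3) ℝ, 0 < F.det →
      frobNorm (matGrad (wr W) F * Fᵀ) ≤ k * (wr W F + 1)) :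
    ∃ C > (0:ℝ), ∀ t ∈ Set.Ioc (0:ℝ) 1, ∀ G : (Fin 3 → ℝ) → Matrix (Fin 3) (Fin 3) ℝ,
      (∀ i j, Measurable fun x => G x i j) →
      (∀ᵐ x ∂volume.restrict Ω, 0 < (1 + t • G x).det) →
      (∫⁻ x in Ω, ENNReal.ofReal (frobNorm (G x) ^ 2) ≤ ENNReal.ofReal (M ^ 2)) →
      (∫⁻ x in Ω, W (1 + t • G x) ≤ ENNReal.ofReal (M * t ^ 2)) →
      ∀ Λ ⊆ Ω, MeasurableSet Λ →
        ∫⁻ x in Λ,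
            ENNReal.ofReal (frobNorm (t⁻¹ • (matGrad (wr W) (1 + t • G x) * (1 + t • G x)ᵀ)))
          ≤ ENNReal.ofReal (C * (t + Real.sqrt (volume Λ).toReal)) := by
  obtain ⟨L, hL, r, hrpos, hkey⟩ := key W δ hδ hWId hC2
  set C2 : ℝ := k * (M + M ^ 2 / r ^ 2) with hC2def
  have hC2pos : 0 < C2 := by positivity
  refine ⟨L * M + C2 + 1, by positivity, ?_⟩
  rintro t ⟨ht0, ht1⟩ G hGm hdet hG2 hWint Λ hΛΩ hΛm
  have htne : t ≠ 0 := ht0.ne'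
  -- measurability of frobNorm ∘ G
  have hfrobG : Measurable fun x => frobNorm (G x) := by
    have hsum : Measurable fun x => frobInner (G x) (G x) := by
      unfold frobInner
      exact Finset.measurable_sum _ fun i _ =>
        Finset.measurable_sum _ fun j _ => (hGm i j).mul (hGm i j)
    exact Real.continuous_sqrt.measurable.comp hsum
  -- the good and bad sets
  set A : Set (Fin 3 → ℝ) := {x | frobNorm (G x) < r / t} ∩ Λ with hAdef
  have hAm : MeasurableSet A :=
    ((measurableSet_lt hfrobG measurable_const)).inter hΛm
  set B : Set (Fin 3 → ℝ) := Λ \ A with hBdef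
  have hBm : MeasurableSet B := hΛm.diff hAm
  have hAΛ : A ⊆ Λ := Set.inter_subset_right
  have hBΛ : B ⊆ Λ := Set.diff_subset
  -- scaled frobenius norm
  have hscale : ∀ x, frobNorm (t⁻¹ • (matGrad (wr W) (1 + t • G x) * (1 + t • G x)ᵀ))
      = t⁻¹ * frobNorm (matGrad (wr W) (1 + t • G x) * (1 + t • G x)ᵀ) := by
    intro x
    rw [frobNorm_smul, abs_of_pos (inv_pos.mpr ht0)]
  have hΛne : volume Λ ≠ ⊤ := (lt_of_le_of_lt (measure_mono hΛΩ) hΩfin).ne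
  -- split the integral
  have hsplit : ∫⁻ x in Λ,
      ENNReal.ofReal (frobNorm (t⁻¹ • (matGrad (wr W) (1 + t • G x) * (1 + t • G x)ᵀ)))
      = (∫⁻ x in A,
          ENNReal.ofReal (frobNorm (t⁻¹ • (matGrad (wr W) (1 + t • G x) * (1 + t • G x)ᵀ))))
        + ∫⁻ x in B,
          ENNReal.ofReal (frobNorm (t⁻¹ • (matGrad (wr W) (1 + t • G x) * (1 + t • G x)ᵀ))) := by
    rw [← lintegral_union hBm Set.disjoint_sdiff_right, Set.union_diff_cancel hAΛ]
  -- GOOD PART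
  have hgood : ∫⁻ x in A,
      ENNReal.ofReal (frobNorm (t⁻¹ • (matGrad (wr W) (1 + t • G x) * (1 + t • G x)ᵀ)))
      ≤ ENNReal.ofReal (L * M * Real.sqrt (volume Λ).toReal) := by
    have hstep1 : ∫⁻ x in A,
        ENNReal.ofReal (frobNorm (t⁻¹ • (matGrad (wr W) (1 + t • G x) * (1 + t • G x)ᵀ)))
        ≤ ∫⁻ x in A, ENNReal.ofReal L * ENNReal.ofReal (frobNorm (G x)) := by
      refine lintegral_mono_ae ((ae_restrict_mem hAm).mono fun x hx => ?_)
      obtain ⟨hx1, _⟩ := hx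
      have htG : ‖t • G x‖ ≤ t * frobNorm (G x) := by
        calc ‖t • G x‖ ≤ frobNorm (t • G x) := norm_le_frobNorm _
          _ = |t| * frobNorm (G x) := frobNorm_smul _ _
          _ = t * frobNorm (G x) := by rw [abs_of_pos ht0]
      have hnorm : ‖(1 + t • G x) - 1‖ < r := by
        rw [add_sub_cancel_left]
        calc ‖t • G x‖ ≤ t * frobNorm (G x) := htG
          _ < t * (r / t) := by exact mul_lt_mul_of_pos_left hx1 ht0
          _ = r := by field_simp
      have hb := hkey _ hnorm
      rw [add_sub_cancel_left] at hb
      rw [hscale x, ← ENNReal.ofReal_mul hL.le]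
      apply ENNReal.ofReal_le_ofReal
      calc t⁻¹ * frobNorm (matGrad (wr W) (1 + t • G x) * (1 + t • G x)ᵀ)
          ≤ t⁻¹ * (L * ‖t • G x‖) :=
            mul_le_mul_of_nonneg_left hb (inv_nonneg.mpr ht0.le)
        _ ≤ t⁻¹ * (L * (t * frobNorm (G x))) := by
            refine mul_le_mul_of_nonneg_left ?_ (inv_nonneg.mpr ht0.le)
            exact mul_le_mul_of_nonneg_left htG hL.le
        _ = L * frobNorm (G x) := by field_simp
    have hstep2 : ∫⁻ x in A, ENNReal.ofReal L * ENNReal.ofReal (frobNorm (G x))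
        = ENNReal.ofReal L * ∫⁻ x in A, ENNReal.ofReal (frobNorm (G x)) :=
      lintegral_const_mul' _ _ ENNReal.ofReal_ne_top
    have hstep3 : ∫⁻ x in A, ENNReal.ofReal (frobNorm (G x))
        ≤ ∫⁻ x in Λ, ENNReal.ofReal (frobNorm (G x)) := lintegral_mono_set hAΛ
    -- Cauchy-Schwarz
    have hmeash : Measurable fun x => ENNReal.ofReal (frobNorm (G x)) :=
      ENNReal.measurable_ofReal.comp hfrobG
    have hcs := ENNReal.lintegral_mul_le_Lp_mul_Lq (volume.restrict Λ)
      Real.HolderConjugate.two_two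
      hmeash.aemeasurable (aemeasurable_const (b := (1:ℝ≥0∞)))
    simp only [Pi.mul_apply, Pi.one_apply, mul_one, ENNReal.one_rpow] at hcs
    rw [lintegral_one, Measure.restrict_apply_univ] at hcs
    have hpow : ∀ x, ENNReal.ofReal (frobNorm (G x)) ^ (2:ℝ)
        = ENNReal.ofReal (frobNorm (G x) ^ 2) := by
      intro x
      rw [ENNReal.ofReal_rpow_of_nonneg (frobNorm_nonneg _) (by norm_num)]
      norm_num
    simp only [hpow] at hcs
    have hsq : (∫⁻ x in Λ, ENNReal.ofReal (frobNorm (G x) ^ 2)) ^ ((1:ℝ)/2)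
        ≤ ENNReal.ofReal M := by
      calc (∫⁻ x in Λ, ENNReal.ofReal (frobNorm (G x) ^ 2)) ^ ((1:ℝ)/2)
          ≤ (ENNReal.ofReal (M ^ 2)) ^ ((1:ℝ)/2) := by
            apply ENNReal.rpow_le_rpow _ (by norm_num)
            exact le_trans (lintegral_mono_set hΛΩ) hG2
        _ = ENNReal.ofReal ((M ^ 2) ^ ((1:ℝ)/2)) :=
            ENNReal.ofReal_rpow_of_nonneg (by positivity) (by norm_num)
        _ = ENNReal.ofReal M := by
            rw [← Real.sqrt_eq_rpow, Real.sqrt_sq hM.le]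
    have hvol : (volume Λ) ^ ((1:ℝ)/2)
        = ENNReal.ofReal (Real.sqrt (volume Λ).toReal) := by
      conv_lhs => rw [← ENNReal.ofReal_toReal hΛne]
      rw [ENNReal.ofReal_rpow_of_nonneg ENNReal.toReal_nonneg (by norm_num),
        ← Real.sqrt_eq_rpow]
    have hh : ∫⁻ x in Λ, ENNReal.ofReal (frobNorm (G x))
        ≤ ENNReal.ofReal M * ENNReal.ofReal (Real.sqrt (volume Λ).toReal) := by
      calc ∫⁻ x in Λ, ENNReal.ofReal (frobNorm (G x))
          ≤ (∫⁻ x in Λ, ENNReal.ofReal (frobNorm (G x) ^ 2)) ^ ((1:ℝ)/2)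
            * (volume Λ) ^ ((1:ℝ)/2) := hcs
        _ ≤ ENNReal.ofReal M * ENNReal.ofReal (Real.sqrt (volume Λ).toReal) := by
            rw [hvol]
            exact mul_le_mul_left hsq _
    calc ∫⁻ x in A,
        ENNReal.ofReal (frobNorm (t⁻¹ • (matGrad (wr W) (1 + t • G x) * (1 + t • G x)ᵀ)))
        ≤ ENNReal.ofReal L * ∫⁻ x in Λ, ENNReal.ofReal (frobNorm (G x)) := by
          refine le_trans hstep1 ?_
          rw [hstep2]
          exact mul_le_mul_right hstep3 _
      _ ≤ ENNReal.ofReal L * (ENNReal.ofReal M * ENNReal.ofReal (Real.sqrt (volume Λ).toReal)) :=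
          mul_le_mul_right hh _
      _ = ENNReal.ofReal (L * M * Real.sqrt (volume Λ).toReal) := by
          rw [← ENNReal.ofReal_mul hM.le, ← ENNReal.ofReal_mul hL.le, mul_assoc]
  -- BAD PART
  have hbad : ∫⁻ x in B,
      ENNReal.ofReal (frobNorm (t⁻¹ • (matGrad (wr W) (1 + t • G x) * (1 + t • G x)ᵀ)))
      ≤ ENNReal.ofReal (C2 * t) := by
    have hdetB : ∀ᵐ x ∂volume.restrict B, 0 < (1 + t • G x).det :=
      ae_restrict_of_ae_restrict_of_subset (hBΛ.trans hΛΩ) hdet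
    have hbadpt : ∀ᵐ x ∂volume.restrict B,
        ENNReal.ofReal (frobNorm (t⁻¹ • (matGrad (wr W) (1 + t • G x) * (1 + t • G x)ᵀ)))
        ≤ ENNReal.ofReal (t⁻¹ * k) * (W (1 + t • G x) + 1) := by
      filter_upwards [hdetB] with x hx
      have hgb := hgrowth _ hx
      rw [hscale x]
      calc ENNReal.ofReal (t⁻¹ * frobNorm (matGrad (wr W) (1 + t • G x) * (1 + t • G x)ᵀ))
          ≤ ENNReal.ofReal (t⁻¹ * (k * (wr W (1 + t • G x) + 1))) :=
            ENNReal.ofReal_le_ofReal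
              (mul_le_mul_of_nonneg_left hgb (inv_nonneg.mpr ht0.le))
        _ = ENNReal.ofReal (t⁻¹ * k) * ENNReal.ofReal (wr W (1 + t • G x) + 1) := by
            rw [← ENNReal.ofReal_mul (by positivity)]
            ring_nf
        _ ≤ ENNReal.ofReal (t⁻¹ * k) * (W (1 + t • G x) + 1) := by
            refine mul_le_mul_right ?_ _
            simp only [wr]
            rw [ENNReal.ofReal_add ENNReal.toReal_nonneg zero_le_one]
            simp only [ENNReal.ofReal_one]
            exact add_le_add_left ENNReal.ofReal_toReal_le _
    -- Chebyshev
    have hcheb : volume B ≤ ENNReal.ofReal (M ^ 2 * t ^ 2 / r ^ 2) := by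
      have h1 : ENNReal.ofReal ((r / t) ^ 2) * volume B ≤ ENNReal.ofReal (M ^ 2) := by
        calc ENNReal.ofReal ((r / t) ^ 2) * volume B
            = ∫⁻ _ in B, ENNReal.ofReal ((r / t) ^ 2) := (setLIntegral_const B _).symm
          _ ≤ ∫⁻ x in B, ENNReal.ofReal (frobNorm (G x) ^ 2) := by
              refine lintegral_mono_ae ((ae_restrict_mem hBm).mono fun x hx => ?_)
              apply ENNReal.ofReal_le_ofReal
              obtain ⟨hxΛ, hxA⟩ := hx
              have hge : r / t ≤ frobNorm (G x) := by
                by_contra hcon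
                exact hxA ⟨lt_of_not_ge hcon, hxΛ⟩
              have h0 : (0:ℝ) ≤ r / t := div_nonneg hrpos.le ht0.le
              nlinarith
          _ ≤ ∫⁻ x in Ω, ENNReal.ofReal (frobNorm (G x) ^ 2) :=
              lintegral_mono_set (hBΛ.trans hΛΩ)
          _ ≤ ENNReal.ofReal (M ^ 2) := hG2
      have ha0 : ENNReal.ofReal ((r / t) ^ 2) ≠ 0 := by
        rw [ne_eq, ENNReal.ofReal_eq_zero, not_le]
        positivity
      have hprod : ENNReal.ofReal ((r / t) ^ 2) * ENNReal.ofReal (M ^ 2 * t ^ 2 / r ^ 2)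
          = ENNReal.ofReal (M ^ 2) := by
        rw [← ENNReal.ofReal_mul (by positivity)]
        congr 1
        field_simp
      exact (ENNReal.mul_le_mul_iff_right ha0 ENNReal.ofReal_ne_top).mp (by rw [hprod]; exact h1)
    calc ∫⁻ x in B,
        ENNReal.ofReal (frobNorm (t⁻¹ • (matGrad (wr W) (1 + t • G x) * (1 + t • G x)ᵀ)))
        ≤ ∫⁻ x in B, ENNReal.ofReal (t⁻¹ * k) * (W (1 + t • G x) + 1) :=
          lintegral_mono_ae hbadpt
      _ = ENNReal.ofReal (t⁻¹ * k) * ∫⁻ x in B, (W (1 + t • G x) + 1) :=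
          lintegral_const_mul' _ _ ENNReal.ofReal_ne_top
      _ = ENNReal.ofReal (t⁻¹ * k) * ∫⁻ x in B, ((1:ℝ≥0∞) + W (1 + t • G x)) := by
          congr 1
          exact lintegral_congr fun x => add_comm _ _
      _ = ENNReal.ofReal (t⁻¹ * k) * (volume B + ∫⁻ x in B, W (1 + t • G x)) := by
          rw [lintegral_add_left measurable_const, setLIntegral_const, one_mul]
      _ ≤ ENNReal.ofReal (t⁻¹ * k)
            * (ENNReal.ofReal (M ^ 2 * t ^ 2 / r ^ 2) + ENNReal.ofReal (M * t ^ 2)) := by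
          refine mul_le_mul_right (add_le_add hcheb ?_) _
          exact le_trans (lintegral_mono_set (hBΛ.trans hΛΩ)) hWint
      _ = ENNReal.ofReal (C2 * t) := by
          rw [← ENNReal.ofReal_add (by positivity) (by positivity),
            ← ENNReal.ofReal_mul (by positivity)]
          congr 1
          rw [hC2def]
          field_simp
          ring
  -- COMBINE
  rw [hsplit]
  calc (∫⁻ x in A,
        ENNReal.ofReal (frobNorm (t⁻¹ • (matGrad (wr W) (1 + t • G x) * (1 + t • G x)ᵀ))))
      + ∫⁻ x in B,
        ENNReal.ofReal (frobNorm (t⁻¹ • (matGrad (wr W) (1 + t • G x) * (1 + t • G x)ᵀ)))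
      ≤ ENNReal.ofReal (L * M * Real.sqrt (volume Λ).toReal) + ENNReal.ofReal (C2 * t) :=
        add_le_add hgood hbad
    _ = ENNReal.ofReal (L * M * Real.sqrt (volume Λ).toReal + C2 * t) :=
        (ENNReal.ofReal_add (by positivity) (by positivity)).symm
    _ ≤ ENNReal.ofReal ((L * M + C2 + 1) * (t + Real.sqrt (volume Λ).toReal)) := by
        apply ENNReal.ofReal_le_ofReal
        have hs : (0:ℝ) ≤ Real.sqrt (volume Λ).toReal := Real.sqrt_nonneg _
        nlinarith [mul_pos hL hM, mul_nonneg (mul_pos hL hM).le hs, mul_nonneg hC2pos.le hs,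
          mul_nonneg (mul_pos hL hM).le ht0.le, mul_nonneg hC2pos.le ht0.le]
end
end

section
/- Let Ω ⊆ ℝⁿ be measurable with finite Lebesgue measure and m ≥ 1. For each h let F_h : Ω → ℝ^m be measurable and let χ_h be the indicator function of a measurable set B_h ⊆ Ω. Assume: (i) χ_h F_h ⇀ F weakly in L²(Ω;ℝ^m); (ii) (1−χ_h)F_h → 0 strongly in L¹(Ω;ℝ^m); (iii) ψ_h → ψ strongly in L²(Ω;ℝ^m) and sup_h ‖ψ_h‖_{L^∞(Ω)} < ∞. Then ∫_Ω F_h · ψ_h dx → ∫_Ω F · ψ dx as h → 0. -/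
open Matrix MeasureTheory Filter Topology
open scoped ENNReal RealInnerProductSpace

noncomputable section

lemma aesm_dot {α : Type*} [MeasurableSpace α] {μ : Measure α} {m : ℕ}
    {f g : α → (Fin m → ℝ)} (hf : AEStronglyMeasurable f μ) (hg : AEStronglyMeasurable g μ) :
    AEStronglyMeasurable (fun x => f x ⬝ᵥ g x) μ := by
  simp only [dotProduct]
  exact Finset.aestronglyMeasurable_fun_sum _ fun i _ =>
    ((continuous_apply i).comp_aestronglyMeasurable hf).mul
      ((continuous_apply i).comp_aestronglyMeasurable hg)

lemma dot_le {m : ℕ} (v w : Fin m → ℝ) : ‖v ⬝ᵥ w‖ ≤ m * (‖v‖ * ‖w‖) := by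
  calc ‖v ⬝ᵥ w‖ ≤ ∑ i, ‖v i * w i‖ := norm_sum_le _ _
    _ ≤ ∑ _i : Fin m, ‖v‖ * ‖w‖ := Finset.sum_le_sum fun i _ => by
        rw [norm_mul]
        exact mul_le_mul (norm_le_pi_norm v i) (norm_le_pi_norm w i) (norm_nonneg _)
          (norm_nonneg _)
    _ = m * (‖v‖ * ‖w‖) := by simp [Finset.sum_const, Finset.card_univ]

lemma inner_euc {m : ℕ} (v w : Fin m → ℝ) :
    ⟪(EuclideanSpace.equiv (Fin m) ℝ).symm v, (EuclideanSpace.equiv (Fin m) ℝ).symm w⟫ = v ⬝ᵥ w := by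
  simp [PiLp.inner_apply, dotProduct, RCLike.inner_apply, mul_comm]

lemma memℒp_euc {α : Type*} [MeasurableSpace α] {μ : Measure α} {m : ℕ} {p : ℝ≥0∞}
    {f : α → (Fin m → ℝ)} (hf : MemLp f p μ) :
    MemLp (fun x => (EuclideanSpace.equiv (Fin m) ℝ).symm (f x)) p μ :=
  ((EuclideanSpace.equiv (Fin m) ℝ).symm : (Fin m → ℝ) →L[ℝ] EuclideanSpace ℝ (Fin m)).comp_memLp' hf

lemma integrable_dot {α : Type*} [MeasurableSpace α] {μ : Measure α} {m : ℕ}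
    {f g : α → (Fin m → ℝ)} (hf : MemLp f 2 μ) (hg : MemLp g 2 μ) :
    Integrable (fun x => f x ⬝ᵥ g x) μ := by
  refine Integrable.mono' (((hf.norm.integrable_sq).add (hg.norm.integrable_sq)).const_mul
    ((m : ℝ) / 2)) (aesm_dot hf.1 hg.1) (ae_of_all _ fun x => ?_)
  have h1 := dot_le (f x) (g x)
  have h2 : ‖f x‖ * ‖g x‖ ≤ (‖f x‖ ^ 2 + ‖g x‖ ^ 2) / 2 := by nlinarith [sq_nonneg (‖f x‖ - ‖g x‖)]
  have hm : (0:ℝ) ≤ m := Nat.cast_nonneg m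
  calc ‖f x ⬝ᵥ g x‖ ≤ m * (‖f x‖ * ‖g x‖) := h1
    _ ≤ (m:ℝ)/2 * (‖f x‖ ^ 2 + ‖g x‖ ^ 2) := by nlinarith

lemma inner_toLp {α : Type*} [MeasurableSpace α] {μ : Measure α} {m : ℕ}
    {f g : α → (Fin m → ℝ)} (hf : MemLp f 2 μ) (hg : MemLp g 2 μ) :
    ⟪(memℒp_euc hf).toLp _, (memℒp_euc hg).toLp _⟫ = ∫ x, f x ⬝ᵥ g x ∂μ := by
  rw [MeasureTheory.L2.inner_def]
  refine integral_congr_ae ?_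
  filter_upwards [(memℒp_euc hf).coeFn_toLp, (memℒp_euc hg).coeFn_toLp] with x h1 h2
  rw [h1, h2, inner_euc]

/-- a mixed weak-`L²` / strong-`L¹` convergence lemma: if `χ_h F_h ⇀ F` weakly
in `L²`, `(1-χ_h) F_h → 0` strongly in `L¹`, and `ψ_h → ψ` strongly in `L²` with a uniform
`L^∞` bound, then `∫ F_h · ψ_h → ∫ F · ψ`. -/
theorem statement6 (n m : ℕ) (hm : 1 ≤ m)
    (Ω : Set (Fin n → ℝ)) (hΩm : MeasurableSet Ω) (hΩfin : volume Ω < ⊤)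
    (F : ℕ → (Fin n → ℝ) → (Fin m → ℝ)) (hFmeas : ∀ h, Measurable (F h))
    (B : ℕ → Set (Fin n → ℝ)) (hBmeas : ∀ h, MeasurableSet (B h)) (hBsub : ∀ h, B h ⊆ Ω)
    (Flim : (Fin n → ℝ) → (Fin m → ℝ))
    (hFL2 : ∀ h, MemLp ((B h).indicator (F h)) 2 (volume.restrict Ω))
    (hFlimL2 : MemLp Flim 2 (volume.restrict Ω))
    (hweak : ∀ Φ : (Fin n → ℝ) → (Fin m → ℝ), MemLp Φ 2 (volume.restrict Ω) →
      Tendsto (fun h => ∫ x in Ω, (B h).indicator (F h) x ⬝ᵥ Φ x) atTop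
        (𝓝 (∫ x in Ω, Flim x ⬝ᵥ Φ x)))
    (hL1 : Tendsto (fun h => ∫⁻ x in Ω \ B h, ENNReal.ofReal ‖F h x‖) atTop (𝓝 0))
    (ψ : ℕ → (Fin n → ℝ) → (Fin m → ℝ)) (ψlim : (Fin n → ℝ) → (Fin m → ℝ))
    (hψL2 : ∀ h, MemLp (ψ h) 2 (volume.restrict Ω))
    (hψlimL2 : MemLp ψlim 2 (volume.restrict Ω))
    (hψconv : Tendsto (fun h => ∫ x in Ω, ‖ψ h x - ψlim x‖ ^ 2) atTop (𝓝 0))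
    (K : ℝ) (hK : ∀ h, ∀ᵐ x ∂volume.restrict Ω, ‖ψ h x‖ ≤ K) :
    Tendsto (fun h => ∫ x in Ω, F h x ⬝ᵥ ψ h x) atTop
      (𝓝 (∫ x in Ω, Flim x ⬝ᵥ ψlim x)) := by
  classical
  set μ := volume.restrict Ω with hμdef
  have hgL2 : ∀ h, MemLp (fun x => ψ h x - ψlim x) 2 μ := fun h => (hψL2 h).sub hψlimL2
  set eF : ℕ → Lp (EuclideanSpace ℝ (Fin m)) 2 μ :=
    fun h => (memℒp_euc (hFL2 h)).toLp _ with heF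
  set eg : ℕ → Lp (EuclideanSpace ℝ (Fin m)) 2 μ :=
    fun h => (memℒp_euc (hgL2 h)).toLp _ with heg
  -- Step A : uniform bound via Banach-Steinhaus
  have hBS : ∃ C, ∀ h, ‖innerSL ℝ (eF h)‖ ≤ C := by
    apply banach_steinhaus
    intro φ
    set Φ : (Fin n → ℝ) → (Fin m → ℝ) := fun x => EuclideanSpace.equiv (Fin m) ℝ (φ x) with hΦ
    have hΦL2 : MemLp Φ 2 μ :=
      ((EuclideanSpace.equiv (Fin m) ℝ) :
        EuclideanSpace ℝ (Fin m) →L[ℝ] (Fin m → ℝ)).comp_memLp' (Lp.memLp φ)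
    have heq : ∀ h, innerSL ℝ (eF h) φ = ∫ x, (B h).indicator (F h) x ⬝ᵥ Φ x ∂μ := by
      intro h
      have h0 : innerSL ℝ (eF h) φ = ⟪eF h, φ⟫ := rfl
      rw [h0, MeasureTheory.L2.inner_def]
      simp only [heF]
      refine integral_congr_ae ?_
      filter_upwards [(memℒp_euc (hFL2 h)).coeFn_toLp] with x h1
      have h2 : φ x = (EuclideanSpace.equiv (Fin m) ℝ).symm (Φ x) := by simp [hΦ]
      rw [h1, h2, inner_euc]
    have htd : Tendsto (fun h => ‖innerSL ℝ (eF h) φ‖) atTop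
        (𝓝 ‖∫ x, Flim x ⬝ᵥ Φ x ∂μ‖) := by
      have := (hweak Φ hΦL2).norm
      refine this.congr fun h => ?_
      rw [heq h]
    obtain ⟨C, hC⟩ := htd.bddAbove_range
    exact ⟨C, fun h => hC ⟨h, rfl⟩⟩
  obtain ⟨C, hC0⟩ := hBS
  have hC : ∀ h, ‖eF h‖ ≤ C := fun h => by rw [← innerSL_apply_norm (𝕜 := ℝ)]; exact hC0 h
  -- Step B : ‖eg h‖ → 0
  have hegsq : ∀ h, ‖eg h‖ ^ 2 = ∫ x, (ψ h x - ψlim x) ⬝ᵥ (ψ h x - ψlim x) ∂μ := by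
    intro h
    rw [← real_inner_self_eq_norm_sq]
    simp only [heg]
    exact inner_toLp (hgL2 h) (hgL2 h)
  have hB2 : Tendsto (fun h => ‖eg h‖ ^ 2) atTop (𝓝 0) := by
    have hub : ∀ h, ‖eg h‖ ^ 2 ≤ m * ∫ x, ‖ψ h x - ψlim x‖ ^ 2 ∂μ := by
      intro h
      rw [hegsq h, ← integral_const_mul]
      have hint1 : Integrable (fun x => (ψ h x - ψlim x) ⬝ᵥ (ψ h x - ψlim x)) μ :=
        integrable_dot (hgL2 h) (hgL2 h)
      have hint2 : Integrable (fun x => (m : ℝ) * ‖ψ h x - ψlim x‖ ^ 2) μ :=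
        ((hgL2 h).norm.integrable_sq).const_mul m
      refine integral_mono hint1 hint2 fun x => ?_
      have h2 := le_trans (le_abs_self _) (dot_le (ψ h x - ψlim x) (ψ h x - ψlim x))
      calc (ψ h x - ψlim x) ⬝ᵥ (ψ h x - ψlim x)
          ≤ m * (‖ψ h x - ψlim x‖ * ‖ψ h x - ψlim x‖) := by simpa using h2
        _ = m * ‖ψ h x - ψlim x‖ ^ 2 := by ring
    have hm0 : Tendsto (fun h => (m : ℝ) * ∫ x, ‖ψ h x - ψlim x‖ ^ 2 ∂μ) atTop (𝓝 0) := by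
      have := hψconv.const_mul (m : ℝ)
      simpa using this
    exact squeeze_zero (fun h => sq_nonneg _) hub hm0
  have hBnorm : Tendsto (fun h => ‖eg h‖) atTop (𝓝 0) := by
    have := (Real.continuous_sqrt.tendsto 0).comp hB2
    simp only [Function.comp_def, Real.sqrt_zero] at this
    exact this.congr fun h => Real.sqrt_sq (norm_nonneg _)
  -- Step C : cross term → 0
  have hterm2 : Tendsto (fun h => ∫ x, (B h).indicator (F h) x ⬝ᵥ (ψ h x - ψlim x) ∂μ)
      atTop (𝓝 0) := by
    refine squeeze_zero_norm (fun h => ?_) (by simpa using hBnorm.const_mul C)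
    have h1 : ∫ x, (B h).indicator (F h) x ⬝ᵥ (ψ h x - ψlim x) ∂μ = ⟪eF h, eg h⟫ := by
      simp only [heF, heg]
      exact (inner_toLp (hFL2 h) (hgL2 h)).symm
    rw [h1, Real.norm_eq_abs]
    exact le_trans (abs_real_inner_le_norm _ _)
      (mul_le_mul_of_nonneg_right (hC h) (norm_nonneg _))
  -- constants for step D
  set c : ℝ := (m : ℝ) * max K 0 with hc
  have hc0 : 0 ≤ c := mul_nonneg (Nat.cast_nonneg m) (le_max_right _ _)
  have hbound : ∀ h, ∀ᵐ x ∂μ,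
      ‖(Ω \ B h).indicator (F h) x ⬝ᵥ ψ h x‖ ≤ c * ‖(Ω \ B h).indicator (F h) x‖ := by
    intro h
    filter_upwards [hK h] with x hx
    have h1 := dot_le ((Ω \ B h).indicator (F h) x) (ψ h x)
    have h2 : ‖ψ h x‖ ≤ max K 0 := le_trans hx (le_max_left _ _)
    have h3 : (0:ℝ) ≤ ‖(Ω \ B h).indicator (F h) x‖ := norm_nonneg _
    have h4 : (0:ℝ) ≤ (m:ℝ) := Nat.cast_nonneg m
    nlinarith [mul_nonneg (mul_nonneg h4 h3) (sub_nonneg.mpr h2)]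
  have hGlin : ∀ h, ∫⁻ x, ENNReal.ofReal ‖(Ω \ B h).indicator (F h) x‖ ∂μ
      = ∫⁻ x in Ω \ B h, ENNReal.ofReal ‖F h x‖ := by
    intro h
    have hms : MeasurableSet (Ω \ B h) := hΩm.diff (hBmeas h)
    have h1 : ∀ x, ENNReal.ofReal ‖(Ω \ B h).indicator (F h) x‖
        = (Ω \ B h).indicator (fun x => ENNReal.ofReal ‖F h x‖) x := by
      intro x
      by_cases hx : x ∈ Ω \ B h
      · simp [Set.indicator_of_mem hx]
      · simp [Set.indicator_of_notMem hx]
    rw [lintegral_congr h1, lintegral_indicator hms, hμdef,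
      Measure.restrict_restrict hms, Set.inter_eq_left.mpr Set.diff_subset]
  have hev : ∀ᶠ h in atTop, (∫⁻ x in Ω \ B h, ENNReal.ofReal ‖F h x‖) < 1 :=
    hL1.eventually_lt_const zero_lt_one
  have hGint : ∀ᶠ h in atTop, Integrable (fun x => (Ω \ B h).indicator (F h) x ⬝ᵥ ψ h x) μ := by
    filter_upwards [hev] with h hh
    have hGmeas : AEStronglyMeasurable ((Ω \ B h).indicator (F h)) μ :=
      ((hFmeas h).indicator (hΩm.diff (hBmeas h))).aestronglyMeasurable
    have hGI : Integrable ((Ω \ B h).indicator (F h)) μ := by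
      refine ⟨hGmeas, ?_⟩
      rw [hasFiniteIntegral_iff_norm, hGlin h]
      exact lt_of_lt_of_le hh le_top
    exact Integrable.mono' (hGI.norm.const_mul c) (aesm_dot hGmeas (hψL2 h).1) (hbound h)
  -- Step D : remainder → 0
  have hterm3 : Tendsto (fun h => ∫ x, (Ω \ B h).indicator (F h) x ⬝ᵥ ψ h x ∂μ)
      atTop (𝓝 0) := by
    have hu : Tendsto (fun h => ENNReal.ofReal c * ∫⁻ x in Ω \ B h, ENNReal.ofReal ‖F h x‖)
        atTop (𝓝 0) := by
      have := ENNReal.Tendsto.const_mul hL1 (Or.inr (by simp : ENNReal.ofReal c ≠ ⊤))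
      simpa using this
    have hu' : Tendsto
        (fun h => (ENNReal.ofReal c * ∫⁻ x in Ω \ B h, ENNReal.ofReal ‖F h x‖).toReal)
        atTop (𝓝 0) := by
      have := (ENNReal.tendsto_toReal (by simp : (0:ℝ≥0∞) ≠ ⊤)).comp hu
      simpa [Function.comp_def] using this
    refine squeeze_zero_norm' ?_ hu'
    filter_upwards [hev] with h hh
    have hne : ENNReal.ofReal c * (∫⁻ x in Ω \ B h, ENNReal.ofReal ‖F h x‖) ≠ ⊤ :=
      ENNReal.mul_ne_top (by simp) (ne_top_of_lt hh)
    calc ‖∫ x, (Ω \ B h).indicator (F h) x ⬝ᵥ ψ h x ∂μ‖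
        ≤ (∫⁻ x, ENNReal.ofReal ‖(Ω \ B h).indicator (F h) x ⬝ᵥ ψ h x‖ ∂μ).toReal :=
          norm_integral_le_lintegral_norm _
      _ ≤ (ENNReal.ofReal c * ∫⁻ x in Ω \ B h, ENNReal.ofReal ‖F h x‖).toReal := by
          refine ENNReal.toReal_mono hne ?_
          calc ∫⁻ x, ENNReal.ofReal ‖(Ω \ B h).indicator (F h) x ⬝ᵥ ψ h x‖ ∂μ
              ≤ ∫⁻ x, ENNReal.ofReal (c * ‖(Ω \ B h).indicator (F h) x‖) ∂μ :=
                lintegral_mono_ae ((hbound h).mono fun x hx => ENNReal.ofReal_le_ofReal hx)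
            _ = ∫⁻ x, ENNReal.ofReal c * ENNReal.ofReal ‖(Ω \ B h).indicator (F h) x‖ ∂μ := by
                simp_rw [ENNReal.ofReal_mul hc0]
            _ = ENNReal.ofReal c * ∫⁻ x, ENNReal.ofReal ‖(Ω \ B h).indicator (F h) x‖ ∂μ :=
                lintegral_const_mul' _ _ (by simp)
            _ = _ := by rw [hGlin h]
  -- Step E : main weak convergence term
  have hterm1 := hweak ψlim hψlimL2
  -- Step F : assemble
  have hsplit : (fun h => ∫ x, (B h).indicator (F h) x ⬝ᵥ ψlim x ∂μ
      + (∫ x, (B h).indicator (F h) x ⬝ᵥ (ψ h x - ψlim x) ∂μ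
        + ∫ x, (Ω \ B h).indicator (F h) x ⬝ᵥ ψ h x ∂μ))
      =ᶠ[atTop] (fun h => ∫ x, F h x ⬝ᵥ ψ h x ∂μ) := by
    filter_upwards [hGint] with h hint3
    have int1 : Integrable (fun x => (B h).indicator (F h) x ⬝ᵥ ψlim x) μ :=
      integrable_dot (hFL2 h) hψlimL2
    have int2 : Integrable (fun x => (B h).indicator (F h) x ⬝ᵥ (ψ h x - ψlim x)) μ :=
      integrable_dot (hFL2 h) (hgL2 h)
    have int23 : Integrable (fun x => (B h).indicator (F h) x ⬝ᵥ (ψ h x - ψlim x)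
        + (Ω \ B h).indicator (F h) x ⬝ᵥ ψ h x) μ := int2.add hint3
    rw [← integral_add int2 hint3, ← integral_add int1 int23]
    refine integral_congr_ae ?_
    filter_upwards [ae_restrict_mem hΩm] with x hx
    by_cases hB : x ∈ B h
    · have hnB : x ∉ Ω \ B h := fun hcon => hcon.2 hB
      simp only [Set.indicator_of_mem hB, Set.indicator_of_notMem hnB, zero_dotProduct,
        add_zero, dotProduct_sub]
      ring
    · have hnB : x ∈ Ω \ B h := ⟨hx, hB⟩
      simp only [Set.indicator_of_notMem hB, Set.indicator_of_mem hnB, zero_dotProduct,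
        zero_add]
  have hfinal := hterm1.add (hterm2.add hterm3)
  simp only [add_zero] at hfinal
  exact Tendsto.congr' hsplit hfinal
end
end

section
/- Let S ⊂ ℝ² be a bounded domain with Lipschitz boundary, let Γ be a nonempty relatively open subset of ∂S, and set Ω := S × (−1/2, 1/2). Let F ∈ L¹(Ω; ℝ³) satisfy ∫_Ω F · ∂₃φ dx = 0 for every φ ∈ C¹_b(ℝ³; ℝ³) with φ(x′, x₃) = 0 for all (x′, x₃) ∈ Γ × (−1/2, 1/2). Then F = 0 almost everywhere in Ω. -/
open Matrix MeasureTheory Filter Topology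
open scoped ENNReal

noncomputable section

/-- `S ⊆ ℝ²` has Lipschitz boundary: near each boundary point, up to a rotation of
coordinates, `S` coincides with the region above the graph of a Lipschitz function. -/
def HasLipschitzBoundary (S : Set (Fin 2 → ℝ)) : Prop :=
  ∀ p ∈ frontier S, ∃ r > (0:ℝ), ∃ R : Matrix (Fin 2) (Fin 2) ℝ, Rᵀ * R = 1 ∧
    ∃ L : NNReal, ∃ f : ℝ → ℝ, LipschitzWith L f ∧
      ∀ x ∈ Metric.ball p r, (x ∈ S ↔ f (R.mulVec (x - p) 0) < R.mulVec (x - p) 1)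

/-- The plate `Ω = S × (-1/2, 1/2) ⊆ ℝ³`. -/
def plateDomain (S : Set (Fin 2 → ℝ)) : Set (Fin 3 → ℝ) :=
  {x | ![x 0, x 1] ∈ S ∧ x 2 ∈ Set.Ioo (-(1/2) : ℝ) (1/2)}

set_option maxHeartbeats 1000000 in
/-- Auxiliary: antiderivative in the third direction of a smooth compactly supported
function, together with its key properties. -/
lemma exists_antideriv (g : (Fin 3 → ℝ) → ℝ) (hg : ContDiff ℝ ((⊤ : ℕ∞) : WithTop ℕ∞) g)
    (hgs : HasCompactSupport g) :
    ∃ φ₀ : (Fin 3 → ℝ) → ℝ, ContDiff ℝ 1 φ₀ ∧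
      (∃ K : ℝ, ∀ x, ‖φ₀ x‖ ≤ K ∧ ‖fderiv ℝ φ₀ x‖ ≤ K) ∧
      (∀ x, fderiv ℝ φ₀ x (Pi.single 2 1) =
        g x - g (x + (-2 : ℝ) • (Pi.single 2 1 : Fin 3 → ℝ))) ∧
      (∀ x, (∀ s : ℝ, g (x + s • (Pi.single 2 1 : Fin 3 → ℝ)) = 0) → φ₀ x = 0) := by
  set e₃ : Fin 3 → ℝ := Pi.single 2 1 with he₃
  set ν : Measure ℝ := volume.restrict (Set.Ioc (-2 : ℝ) 0) with hν
  haveI : IsFiniteMeasure ν := by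
    constructor
    rw [hν, Measure.restrict_apply_univ]
    exact measure_Ioc_lt_top
  have hgd : Differentiable ℝ g := hg.differentiable (by simp)
  have hg' : Continuous (fderiv ℝ g) := hg.continuous_fderiv (by simp)
  obtain ⟨C₀, hC₀⟩ := hgs.exists_bound_of_continuous hg.continuous
  obtain ⟨C₁, hC₁⟩ := (hgs.fderiv ℝ).exists_bound_of_continuous hg'
  have hpathcont : ∀ x : Fin 3 → ℝ, Continuous fun s : ℝ => x + s • e₃ :=
    fun x => continuous_const.add (continuous_id.smul continuous_const)
  set φ₀ : (Fin 3 → ℝ) → ℝ := fun x => ∫ s, g (x + s • e₃) ∂ν with hφ₀def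
  set A : (Fin 3 → ℝ) → ((Fin 3 → ℝ) →L[ℝ] ℝ) :=
    fun x => ∫ s, fderiv ℝ g (x + s • e₃) ∂ν with hAdef
  have hpt : ∀ (s : ℝ) (x : Fin 3 → ℝ),
      HasFDerivAt (fun y => g (y + s • e₃)) (fderiv ℝ g (x + s • e₃)) x := by
    intro s x
    have h1 : HasFDerivAt (fun y : Fin 3 → ℝ => y + s • e₃)
        (ContinuousLinearMap.id ℝ (Fin 3 → ℝ)) x := (hasFDerivAt_id x).add_const _
    exact ((hgd (x + s • e₃)).hasFDerivAt).comp x h1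
  have hmeas : ∀ x, AEStronglyMeasurable (fun s => g (x + s • e₃)) ν := fun x =>
    (hg.continuous.comp (hpathcont x)).aestronglyMeasurable
  have hmeas' : ∀ x, AEStronglyMeasurable (fun s => fderiv ℝ g (x + s • e₃)) ν := fun x =>
    (hg'.comp (hpathcont x)).aestronglyMeasurable
  have hbound : Integrable (fun _ : ℝ => C₁) ν := integrable_const _
  have hint' : ∀ x, Integrable (fun s => fderiv ℝ g (x + s • e₃)) ν := fun x =>
    Integrable.mono' hbound (hmeas' x) (Eventually.of_forall fun s => hC₁ _)
  have hA : ∀ x, HasFDerivAt φ₀ (A x) x := by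
    intro x
    exact hasFDerivAt_integral_of_dominated_of_fderiv_le
      (F' := fun y s => fderiv ℝ g (y + s • e₃)) (Metric.ball_mem_nhds x one_pos)
      (Eventually.of_forall fun y => hmeas y)
      (Integrable.mono' (integrable_const C₀) (hmeas x) (Eventually.of_forall fun s => hC₀ _))
      (hmeas' x)
      (Eventually.of_forall fun s y _ => hC₁ _)
      hbound
      (Eventually.of_forall fun s y _ => hpt s y)
  have hAcont : Continuous A := by
    refine continuous_of_dominated hmeas' (fun x => Eventually.of_forall fun s => hC₁ _)
      hbound (Eventually.of_forall fun s => ?_)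
    exact hg'.comp (continuous_id.add continuous_const)
  have hφ₀fd : ∀ x, fderiv ℝ φ₀ x = A x := fun x => (hA x).fderiv
  have hφ₀C1 : ContDiff ℝ 1 φ₀ := by
    rw [contDiff_one_iff_fderiv]
    refine ⟨fun x => (hA x).differentiableAt, ?_⟩
    exact (funext hφ₀fd : fderiv ℝ φ₀ = A) ▸ hAcont
  refine ⟨φ₀, hφ₀C1, ⟨max (C₀ * (ν Set.univ).toReal) (C₁ * (ν Set.univ).toReal),
      fun x => ⟨?_, ?_⟩⟩, ?_, ?_⟩
  · exact le_max_of_le_left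
      (norm_integral_le_of_norm_le_const (Eventually.of_forall fun s => hC₀ _))
  · rw [hφ₀fd x]
    exact le_max_of_le_right
      (norm_integral_le_of_norm_le_const (Eventually.of_forall fun s => hC₁ _))
  · intro x
    rw [hφ₀fd x]
    have h1 : A x e₃ = ∫ s, fderiv ℝ g (x + s • e₃) e₃ ∂ν :=
      ContinuousLinearMap.integral_apply (hint' x) e₃
    have hderiv : ∀ s : ℝ, HasDerivAt (fun s : ℝ => g (x + s • e₃))
        (fderiv ℝ g (x + s • e₃) e₃) s := by
      intro s
      have h2 : HasDerivAt (fun s : ℝ => x + s • e₃) e₃ s := by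
        simpa using ((hasDerivAt_id s).smul_const e₃).const_add x
      exact (hgd (x + s • e₃)).hasFDerivAt.comp_hasDerivAt s h2
    have hcont : Continuous fun s : ℝ => fderiv ℝ g (x + s • e₃) e₃ :=
      (hg'.comp (hpathcont x)).clm_apply continuous_const
    have h3 : ∫ s in (-2 : ℝ)..0, fderiv ℝ g (x + s • e₃) e₃ =
        g (x + (0:ℝ) • e₃) - g (x + (-2:ℝ) • e₃) :=
      intervalIntegral.integral_eq_sub_of_hasDerivAt (fun t _ => hderiv t)
        (hcont.intervalIntegrable _ _)
    have h4 : ∫ s in (-2 : ℝ)..0, fderiv ℝ g (x + s • e₃) e₃ =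
        ∫ s, fderiv ℝ g (x + s • e₃) e₃ ∂ν :=
      intervalIntegral.integral_of_le (by norm_num)
    rw [h1, ← h4, h3]
    simp
  · intro x hx
    have : (fun s : ℝ => g (x + s • e₃)) = fun _ => (0 : ℝ) := funext hx
    simp only [hφ₀def, this, integral_zero]

/-- if `F ∈ L¹(Ω; ℝ³)` satisfies `∫_Ω F · ∂₃φ dx = 0` for every bounded `C¹`
test map `φ` vanishing on `Γ × (-1/2, 1/2)`, then `F = 0` a.e. in `Ω`. -/
theorem statement7 (S : Set (Fin 2 → ℝ)) (hSopen : IsOpen S) (hSconn : IsConnected S)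
    (hSbdd : Bornology.IsBounded S) (hSlip : HasLipschitzBoundary S)
    (Γ : Set (Fin 2 → ℝ)) (hΓsub : Γ ⊆ frontier S) (hΓne : Γ.Nonempty)
    (hΓopen : ∃ V : Set (Fin 2 → ℝ), IsOpen V ∧ Γ = V ∩ frontier S)
    (F : (Fin 3 → ℝ) → (Fin 3 → ℝ))
    (hFint : Integrable F (volume.restrict (plateDomain S)))
    (hF : ∀ φ : (Fin 3 → ℝ) → (Fin 3 → ℝ), ContDiff ℝ 1 φ →
      (∃ K : ℝ, ∀ x, ‖φ x‖ ≤ K ∧ ‖fderiv ℝ φ x‖ ≤ K) →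
      (∀ p ∈ Γ, ∀ x₃ ∈ Set.Ioo (-(1/2) : ℝ) (1/2), φ ![p 0, p 1, x₃] = 0) →
      ∫ x in plateDomain S, F x ⬝ᵥ fderiv ℝ φ x (Pi.single 2 1) = 0) :
    ∀ᵐ x ∂volume.restrict (plateDomain S), F x = 0 := by
  classical
  set e₃ : Fin 3 → ℝ := Pi.single 2 1 with he₃
  have he₃0 : e₃ 0 = 0 := Pi.single_eq_of_ne (by decide) 1
  have he₃1 : e₃ 1 = 0 := Pi.single_eq_of_ne (by decide) 1
  have he₃2 : e₃ 2 = 1 := Pi.single_eq_same 2 1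
  set Ω := plateDomain S with hΩdef
  have hΩopen : IsOpen Ω := by
    have h1 : Continuous fun x : Fin 3 → ℝ => (![x 0, x 1] : Fin 2 → ℝ) := by
      refine continuous_pi fun j => ?_
      fin_cases j
      · exact continuous_apply 0
      · exact continuous_apply 1
    have h2 : Ω = (fun x : Fin 3 → ℝ => (![x 0, x 1] : Fin 2 → ℝ)) ⁻¹' S ∩
        (fun x : Fin 3 → ℝ => x 2) ⁻¹' Set.Ioo (-(1/2) : ℝ) (1/2) := rfl
    rw [h2]
    exact (hSopen.preimage h1).inter (isOpen_Ioo.preimage (continuous_apply 2))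
  set μ := volume.restrict Ω with hμdef
  have hloc : LocallyIntegrableOn F Ω μ := (hFint.locallyIntegrable).locallyIntegrableOn Ω
  have key : ∀ᵐ x ∂μ, x ∈ Ω → F x = 0 := by
    refine hΩopen.ae_eq_zero_of_integral_contDiff_smul_eq_zero hloc ?_
    intro g hg hgs hgsupp
    obtain ⟨φ₀, hφC1, ⟨K₀, hK₀⟩, hd3, hvan⟩ := exists_antideriv g hg hgs
    have hcomp : ∀ i : Fin 3, ∫ x, g x * F x i ∂μ = 0 := by
      intro i
      set c : Fin 3 → ℝ := Pi.single i 1 with hc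
      set φ : (Fin 3 → ℝ) → (Fin 3 → ℝ) := fun x => φ₀ x • c with hφdef
      have hfd : ∀ x, fderiv ℝ φ x = (fderiv ℝ φ₀ x).smulRight c := fun x =>
        (((hφC1.differentiable one_ne_zero) x).hasFDerivAt.smul_const c).fderiv
      have hKnn : (0 : ℝ) ≤ K₀ := le_trans (norm_nonneg _) (hK₀ 0).1
      have hbd : ∃ K : ℝ, ∀ x, ‖φ x‖ ≤ K ∧ ‖fderiv ℝ φ x‖ ≤ K := by
        refine ⟨K₀ * ‖c‖, fun x => ⟨?_, ?_⟩⟩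
        · rw [hφdef]
          simp only [norm_smul]
          exact mul_le_mul_of_nonneg_right (hK₀ x).1 (norm_nonneg c)
        · rw [hfd x, ContinuousLinearMap.norm_smulRight_apply]
          exact mul_le_mul_of_nonneg_right (hK₀ x).2 (norm_nonneg c)
      have hvanΓ : ∀ p ∈ Γ, ∀ x₃ ∈ Set.Ioo (-(1/2) : ℝ) (1/2), φ ![p 0, p 1, x₃] = 0 := by
        intro p hp x₃ hx₃
        have hpS : p ∉ S := by
          have := hΓsub hp
          rw [hSopen.frontier_eq] at this
          exact this.2
        have hz : φ₀ ![p 0, p 1, x₃] = 0 := by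
          refine hvan _ fun s => ?_
          have hnot : (![p 0, p 1, x₃] + s • e₃) ∉ tsupport g := by
            intro hmem
            have hΩmem := hgsupp hmem
            have h0 : (![p 0, p 1, x₃] + s • e₃) 0 = p 0 := by
              simp [he₃0]
            have h1 : (![p 0, p 1, x₃] + s • e₃) 1 = p 1 := by
              simp [he₃1]
            have hS' : ![p 0, p 1] ∈ S := by
              have := hΩmem.1
              rwa [h0, h1] at this
            have hpeq : (![p 0, p 1] : Fin 2 → ℝ) = p := by
              funext j; fin_cases j <;> rfl
            rw [hpeq] at hS'
            exact hpS hS'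
          exact image_eq_zero_of_notMem_tsupport hnot
        rw [hφdef]
        simp [hz]
      have h0 := hF φ (hφC1.smul contDiff_const) hbd hvanΓ
      have heq : Set.EqOn (fun x => F x ⬝ᵥ fderiv ℝ φ x (Pi.single 2 1))
          (fun x => g x * F x i) Ω := by
        intro x hx
        have hzero : g (x + (-2 : ℝ) • e₃) = 0 := by
          refine image_eq_zero_of_notMem_tsupport fun hmem => ?_
          have hΩmem := hgsupp hmem
          have h2 : (x + (-2 : ℝ) • e₃) 2 = x 2 - 2 := by
            simp [he₃2]; ring
          have := hΩmem.2.1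
          rw [h2] at this
          have hx2 := hx.2.2
          linarith
        have : fderiv ℝ φ x (Pi.single 2 1) = g x • c := by
          rw [hfd x, ContinuousLinearMap.smulRight_apply, ← he₃, hd3 x, ← he₃, hzero, sub_zero]
        simp only [this, hc]
        rw [dotProduct_smul, dotProduct_single]
        simp [mul_comm]
      have h1 : ∫ x in Ω, (fun x => F x ⬝ᵥ fderiv ℝ φ x (Pi.single 2 1)) x ∂volume =
          ∫ x in Ω, g x * F x i ∂volume := setIntegral_congr_fun hΩopen.measurableSet heq
      rw [hμdef]
      rw [← h1]
      exact h0
    have hgFint : Integrable (fun x => g x • F x) μ :=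
      (hFint.locallyIntegrable).integrable_smul_left_of_hasCompactSupport hg.continuous hgs
    funext i
    have h2 := (ContinuousLinearMap.proj (R := ℝ) (φ := fun _ : Fin 3 => ℝ) i).integral_comp_comm
      hgFint
    have h3 : (∫ x, g x • F x ∂μ) i = ∫ x, g x * F x i ∂μ := h2.symm
    simp only [Pi.zero_apply]
    exact h3.trans (hcomp i)
  filter_upwards [key, ae_restrict_mem hΩopen.measurableSet] with x h1 h2 using h1 h2
end
end

section
/- For every F ∈ M^{3×3} with det F > 0, the Frobenius distance of F to SO(3) satisfies dist(F, SO(3)) = |(FᵀF)^{1/2} − Id|, where (FᵀF)^{1/2} denotes the unique symmetric positive definite square root of FᵀF. -/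
open Matrix MeasureTheory Filter Topology
open scoped ENNReal

noncomputable section

attribute [local instance] Matrix.normedAddCommGroup Matrix.normedSpace

lemma posDef_of_posSemidef_det_ne_zero {n : ℕ} {A : Matrix (Fin n) (Fin n) ℝ}
    (h : A.PosSemidef) (hd : A.det ≠ 0) : A.PosDef := by
  exact h.posDef_iff_det_ne_zero.mpr hd

lemma trace_mul_le_trace {n : ℕ} {B Q : Matrix (Fin n) (Fin n) ℝ}
    (hB : B.PosSemidef) (hQ : Qᵀ * Q = 1) : (B * Q).trace ≤ B.trace := by
  have hH := hB.1
  set U : Matrix (Fin n) (Fin n) ℝ := (hH.eigenvectorUnitary : Matrix (Fin n) (Fin n) ℝ) with hUdef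
  set d : Fin n → ℝ := hH.eigenvalues with hddef
  have hspec : B = U * diagonal d * star U := by
    have := hH.spectral_theorem
    simpa using this
  have hUU : star U * U = 1 := Matrix.mem_unitaryGroup_iff'.mp hH.eigenvectorUnitary.2
  have hUU' : U * star U = 1 := Matrix.mem_unitaryGroup_iff.mp hH.eigenvectorUnitary.2
  have hstar : star U = Uᵀ := by
    ext i j; simp [Matrix.star_apply]
  set Q' : Matrix (Fin n) (Fin n) ℝ := Uᵀ * Q * U with hQ'def
  have hQ'orth : Q'ᵀ * Q' = 1 := by
    have : Q'ᵀ = Uᵀ * Qᵀ * U := by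
      simp [hQ'def, Matrix.transpose_mul, Matrix.mul_assoc]
    rw [this, hQ'def]
    have hUUt : U * Uᵀ = 1 := by rw [← hstar]; exact hUU'
    have hUtU : Uᵀ * U = 1 := by rw [← hstar]; exact hUU
    calc Uᵀ * Qᵀ * U * (Uᵀ * Q * U) = Uᵀ * Qᵀ * (U * Uᵀ) * Q * U := by
          simp only [Matrix.mul_assoc]
      _ = Uᵀ * (Qᵀ * Q) * U := by rw [hUUt]; simp only [Matrix.mul_one, Matrix.mul_assoc]
      _ = 1 := by rw [hQ, Matrix.mul_one, hUtU]
  have hdiag : ∀ i, Q' i i ≤ 1 := by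
    intro i
    have hcol : ∑ k, Q' k i ^ 2 = 1 := by
      have := congrFun (congrFun hQ'orth i) i
      simpa [Matrix.mul_apply, Matrix.one_apply, sq] using this
    have h1 : Q' i i ^ 2 ≤ 1 := by
      rw [← hcol]
      exact Finset.single_le_sum (f := fun k => Q' k i ^ 2)
        (fun k _ => sq_nonneg _) (Finset.mem_univ i)
    nlinarith [sq_nonneg (Q' i i - 1), sq_nonneg (Q' i i + 1)]
  have hdnn : ∀ i, 0 ≤ d i := fun i => hB.eigenvalues_nonneg i
  have htr1 : (B * Q).trace = ∑ i, d i * Q' i i := by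
    rw [hspec, hstar]
    have : U * diagonal d * Uᵀ * Q = U * (diagonal d * (Uᵀ * Q)) := by
      simp only [Matrix.mul_assoc]
    rw [this, Matrix.trace_mul_comm]
    rw [show diagonal d * (Uᵀ * Q) * U = diagonal d * Q' by
      simp only [hQ'def, Matrix.mul_assoc]]
    simp [Matrix.trace, Matrix.mul_apply, Matrix.diagonal, Matrix.diag]
  have htr2 : B.trace = ∑ i, d i := by
    rw [hspec, hstar, Matrix.trace_mul_comm]
    rw [show Uᵀ * (U * diagonal d) = diagonal d by
      rw [← Matrix.mul_assoc, ← hstar, hUU, Matrix.one_mul]]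
    simp [Matrix.trace, Matrix.diagonal, Matrix.diag]
  rw [htr1, htr2]
  apply Finset.sum_le_sum
  intro i _
  calc d i * Q' i i ≤ d i * 1 := mul_le_mul_of_nonneg_left (hdiag i) (hdnn i)
    _ = d i := mul_one _

lemma frobInner_eq_trace {n : ℕ} (A B : Matrix (Fin n) (Fin n) ℝ) :
    frobInner A B = (Aᵀ * B).trace := by
  simp only [frobInner, Matrix.trace, Matrix.diag, Matrix.mul_apply, Matrix.transpose_apply]
  rw [Finset.sum_comm]

lemma frobNorm_orth_mul {n : ℕ} {R : Matrix (Fin n) (Fin n) ℝ} (hR : Rᵀ * R = 1)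
    (M : Matrix (Fin n) (Fin n) ℝ) : frobNorm (R * M) = frobNorm M := by
  unfold frobNorm
  rw [frobInner_eq_trace, frobInner_eq_trace]
  congr 1
  rw [Matrix.transpose_mul]
  rw [show Mᵀ * Rᵀ * (R * M) = Mᵀ * (Rᵀ * R) * M by simp only [Matrix.mul_assoc]]
  rw [hR, Matrix.mul_one]

/-- for `det F > 0`, `dist(F, SO(3)) = |(FᵀF)^{1/2} - Id|`, where `(FᵀF)^{1/2}`
is the unique symmetric positive definite square root of `FᵀF`. -/
theorem statement9 (F : Matrix (Fin 3) (Fin 3) ℝ) (hF : 0 < F.det) :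
    (∃! B : Matrix (Fin 3) (Fin 3) ℝ, B.IsSymm ∧ B.PosDef ∧ B * B = Fᵀ * F) ∧
    ∀ B : Matrix (Fin 3) (Fin 3) ℝ, B.IsSymm → B.PosDef → B * B = Fᵀ * F →
      distSO3 F = frobNorm (B - 1) := by
  have hdF : F.det ≠ 0 := ne_of_gt hF
  have hCT : Fᴴ = Fᵀ := Matrix.conjTranspose_eq_transpose_of_trivial F
  have hPSD : (Fᵀ * F).PosSemidef := by
    have := Matrix.posSemidef_conjTranspose_mul_self F
    rwa [hCT] at this
  have hdet2 : (Fᵀ * F).det = F.det * F.det := by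
    rw [Matrix.det_mul, Matrix.det_transpose]
  have hdetFF : (Fᵀ * F).det ≠ 0 := by rw [hdet2]; positivity
  -- existence: the mathlib sqrt
  obtain ⟨B₀, hB₀psd, hB₀sq⟩ : ∃ B₀ : Matrix (Fin 3) (Fin 3) ℝ, B₀.PosSemidef ∧ B₀ * B₀ = Fᵀ * F := by
    open scoped MatrixOrder in
    exact ⟨CFC.sqrt (Fᵀ * F), (CFC.sqrt_nonneg _).posSemidef, CFC.sqrt_mul_sqrt_self _ hPSD.nonneg⟩
  have hB₀det : B₀.det ≠ 0 := by
    intro h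
    apply hdetFF
    rw [← hB₀sq, Matrix.det_mul, h, zero_mul]
  have hB₀pd : B₀.PosDef := posDef_of_posSemidef_det_ne_zero hB₀psd hB₀det
  have hB₀symm : B₀.IsSymm := by
    have := hB₀psd.1
    rwa [Matrix.IsHermitian, Matrix.conjTranspose_eq_transpose_of_trivial] at this
  have huniq : ∀ B : Matrix (Fin 3) (Fin 3) ℝ, B.IsSymm → B.PosDef → B * B = Fᵀ * F → B = B₀ := by
    intro B _ hpd hsq
    open scoped MatrixOrder in
    exact (CFC.mul_self_eq_mul_self_iff B B₀ hpd.posSemidef.nonneg hB₀psd.nonneg).mp (by rw [hsq, hB₀sq])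
  refine ⟨⟨B₀, ⟨hB₀symm, hB₀pd, hB₀sq⟩, fun B hB => huniq B hB.1 hB.2.1 hB.2.2⟩, ?_⟩
  intro B hsymm hpd hsq
  have hBT : Bᵀ = B := hsymm
  have hBdet : B.det ≠ 0 := ne_of_gt hpd.det_pos
  set R₀ : Matrix (Fin 3) (Fin 3) ℝ := F * B⁻¹ with hR₀def
  have hBinvT : B⁻¹ᵀ = B⁻¹ := by rw [Matrix.transpose_nonsing_inv, hBT]
  have hBBinv : B * B⁻¹ = 1 := Matrix.mul_nonsing_inv B hBdet.isUnit
  have hBinvB : B⁻¹ * B = 1 := Matrix.nonsing_inv_mul B hBdet.isUnit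
  have hR₀orth : R₀ᵀ * R₀ = 1 := by
    rw [hR₀def, Matrix.transpose_mul, hBinvT]
    calc B⁻¹ * Fᵀ * (F * B⁻¹) = B⁻¹ * (Fᵀ * F) * B⁻¹ := by simp only [Matrix.mul_assoc]
      _ = B⁻¹ * (B * B) * B⁻¹ := by rw [hsq]
      _ = (B⁻¹ * B) * (B * B⁻¹) := by simp only [Matrix.mul_assoc]
      _ = 1 := by rw [hBBinv, hBinvB, Matrix.one_mul]
  have hFRB : F = R₀ * B := by
    rw [hR₀def, Matrix.mul_assoc, hBinvB, Matrix.mul_one]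
  have hR₀det : R₀.det = 1 := by
    have h1 : R₀.det * R₀.det = 1 := by
      have := congrArg Matrix.det hR₀orth
      rwa [Matrix.det_mul, Matrix.det_transpose, Matrix.det_one] at this
    have hdp : R₀.det * B.det = F.det := by
      rw [← Matrix.det_mul, ← hFRB]
    have hBpos : 0 < B.det := hpd.det_pos
    nlinarith
  have hR₀SO3 : R₀ ∈ SO3 := ⟨hR₀orth, hR₀det⟩
  -- trace identities
  have htrace1 : (1 : Matrix (Fin 3) (Fin 3) ℝ).trace = 3 := by
    simp [Matrix.trace_one]
  have hfr : ∀ R : Matrix (Fin 3) (Fin 3) ℝ, R ∈ SO3 →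
      frobInner (F - R) (F - R) = (B * B).trace - 2 * ((Fᵀ * R).trace) + 3 := by
    intro R hR
    rw [frobInner_eq_trace]
    rw [Matrix.transpose_sub, Matrix.sub_mul, Matrix.mul_sub, Matrix.mul_sub]
    rw [Matrix.trace_sub, Matrix.trace_sub, Matrix.trace_sub]
    have hRR : (Rᵀ * R).trace = 3 := by rw [hR.1, htrace1]
    have hFF : (Fᵀ * F).trace = (B * B).trace := by rw [← hsq]
    have hRF : (Rᵀ * F).trace = (Fᵀ * R).trace := by
      rw [← Matrix.trace_transpose (Rᵀ * F), Matrix.transpose_mul, Matrix.transpose_transpose]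
    rw [hRR, hFF, hRF]
    ring
  have hfrB : frobInner (B - 1) (B - 1) = (B * B).trace - 2 * B.trace + 3 := by
    rw [frobInner_eq_trace]
    rw [Matrix.transpose_sub, Matrix.sub_mul, Matrix.mul_sub, Matrix.mul_sub]
    rw [Matrix.trace_sub, Matrix.trace_sub, Matrix.trace_sub]
    rw [Matrix.transpose_one, hBT]
    simp only [Matrix.mul_one, Matrix.one_mul, htrace1]
    ring
  -- key inequality: tr(Fᵀ R) ≤ tr B for R ∈ SO3
  have hkey : ∀ R : Matrix (Fin 3) (Fin 3) ℝ, R ∈ SO3 → (Fᵀ * R).trace ≤ B.trace := by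
    intro R hR
    have hQ : (R₀ᵀ * R)ᵀ * (R₀ᵀ * R) = 1 := by
      rw [Matrix.transpose_mul, Matrix.transpose_transpose]
      have hR₀R₀t : R₀ * R₀ᵀ = 1 := mul_eq_one_comm.mp hR₀orth
      calc Rᵀ * R₀ * (R₀ᵀ * R) = Rᵀ * (R₀ * R₀ᵀ) * R := by simp only [Matrix.mul_assoc]
        _ = Rᵀ * R := by rw [hR₀R₀t, Matrix.mul_one]
        _ = 1 := hR.1
    have heq : (Fᵀ * R).trace = (B * (R₀ᵀ * R)).trace := by
      rw [hFRB, Matrix.transpose_mul, hBT, Matrix.mul_assoc]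
    rw [heq]
    exact trace_mul_le_trace hpd.posSemidef hQ
  -- lower bound
  have hlb : ∀ R : Matrix (Fin 3) (Fin 3) ℝ, R ∈ SO3 →
      frobNorm (B - 1) ≤ frobNorm (F - R) := by
    intro R hR
    unfold frobNorm
    apply Real.sqrt_le_sqrt
    rw [hfr R hR, hfrB]
    have := hkey R hR
    linarith
  -- attainment
  have hatt : frobNorm (F - R₀) = frobNorm (B - 1) := by
    have : F - R₀ = R₀ * (B - 1) := by
      rw [Matrix.mul_sub, Matrix.mul_one, ← hFRB]
    rw [this, frobNorm_orth_mul hR₀orth]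
  -- conclude
  have hleast : IsLeast ((fun R => frobNorm (F - R)) '' SO3) (frobNorm (B - 1)) := by
    constructor
    · exact ⟨R₀, hR₀SO3, hatt⟩
    · rintro x ⟨R, hR, rfl⟩
      exact hlb R hR
  exact hleast.csInf_eq
end
end
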